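/- arXiv:1701.04813 — 4 statements merged into one kernel-verified Lean document; each statement's English description precedes it below -/
import Mathlib

section
/- For every sequence q = q(n) of integers with 2 ≤ q ≤ (2/√e)·n, the probability that a random n×n puzzle with q jig types has at least two non-similar solutions tends to 1 as n → ∞. -/
open Finset Filter

noncomputable section

/-- A piece of the `n × n` puzzle, identified with its cell in the original grid. -/
abbrev Cell (n : ℕ) := Fin n × Fin n

/-- The unit vector in direction `d` (`0` = right, `1` = up, `2` = left, `3` = down). -/
def dirVec (d : ZMod 4) : ℤ × ℤ :=
  if d = 0 then (1, 0) else if d = 1 then (0, 1) else if d = 2 then (-1, 0) else (0, -1)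

/-- The integer coordinates of a cell. -/
def cellZ {n : ℕ} (c : Cell n) : ℤ × ℤ := ((c.1 : ℤ), (c.2 : ℤ))

/-- A carving assigns a jig type (one of `q` possibilities) to each of the four
(cyclically ordered) sides of each of the `n²` pieces. -/
abbrev Carving (n q : ℕ) := Cell n → ZMod 4 → Fin q

/-- A carving is valid if each pair of coincident sides of adjacent pieces of the
original grid receives complementary jig types (`ι` is the complementation involution). -/
def IsValidCarving {n q : ℕ} (ι : Fin q → Fin q) (ω : Carving n q) : Prop :=
  ∀ p p' : Cell n, ∀ d : ZMod 4,
    cellZ p' = cellZ p + dirVec d → ω p' (d + 2) = ι (ω p d)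

open scoped Classical in
/-- The probability of the event `P` for a carving chosen uniformly at random among
all valid carvings. -/
def puzzleProb {n q : ℕ} (ι : Fin q → Fin q) (P : Carving n q → Prop) : ℝ :=
  ((Finset.univ.filter fun ω : Carving n q => IsValidCarving ι ω ∧ P ω).card : ℝ) /
  ((Finset.univ.filter fun ω : Carving n q => IsValidCarving ι ω).card : ℝ)

/-- A complete assembly: a bijective placement of the pieces onto the cells of the
`n × n` grid together with an orientation (`ℤ/4`) for each piece. -/
structure Assembly (n : ℕ) where
  pos : Equiv.Perm (Cell n)
  rot : Cell n → ZMod 4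

/-- The planted assembly keeps every piece in its original position and orientation. -/
def planted (n : ℕ) : Assembly n := ⟨Equiv.refl _, fun _ => 0⟩

/-- A complete assembly is feasible for the carving `ω` if all pairs of abutting sides
carry complementary jig types.  The side of piece `p` facing direction `d` after `p` is
rotated by `A.rot p` quarter turns is its original side `d - A.rot p`. -/
def Assembly.Feasible {n q : ℕ} (ι : Fin q → Fin q) (A : Assembly n) (ω : Carving n q) :
    Prop :=
  ∀ p p' : Cell n, ∀ d : ZMod 4,
    cellZ (A.pos p') = cellZ (A.pos p) + dirVec d →
    ω p' (d + 2 - A.rot p') = ι (ω p (d - A.rot p))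

/-- The carving of the grid obtained by reassembling the pieces according to `A`:
side `d` of the grid cell `c` receives the jig type of the corresponding side of the
piece placed on `c`. -/
def Assembly.carving {n q : ℕ} (A : Assembly n) (ω : Carving n q) : Carving n q :=
  fun c d => ω (A.pos.symm c) (d - A.rot (A.pos.symm c))

/-- Rotation of the grid by 90 degrees. -/
def rotCell {n : ℕ} : Equiv.Perm (Cell n) where
  toFun c := (c.2.rev, c.1)
  invFun c := (c.2, c.1.rev)
  left_inv c := by simp
  right_inv c := by simp

/-- Global rotation of a carving of the grid by 90 degrees. -/
def rotateCarving {n q : ℕ} (ω : Carving n q) : Carving n q :=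
  fun c d => ω (rotCell.symm c) (d - 1)

/-- Two solutions are similar if they differ only by a global rotation of the puzzle,
a permutation of pieces with identical carvings, and rotations of pieces whose carving
is rotation-invariant; equivalently, if they induce the same carving of the grid up to
a global rotation. -/
def PuzzleSimilar {n q : ℕ} (A B : Assembly n) (ω : Carving n q) : Prop :=
  ∃ r : Fin 4, B.carving ω = rotateCarving^[r.val] (A.carving ω)

/-- The planted assembly rotated globally by `r` quarter turns. -/
def rotatedPlanted (n : ℕ) (r : Fin 4) : Assembly n :=
  ⟨rotCell ^ r.val, fun _ => (r.val : ZMod 4)⟩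

/-- The cell `c` belongs to the `k × k` window with lower-left corner `(a, b)`. -/
def inWindow {n : ℕ} (a b k : ℕ) (c : Cell n) : Prop :=
  a ≤ c.1.val ∧ c.1.val < a + k ∧ b ≤ c.2.val ∧ c.2.val < b + k

open scoped Classical in
/-- The number of dual edges of the `k × k` window at `(a, b)` (each dual edge recorded
once, as `(c, c', d)` with `d ∈ {right, up}`) whose abutting jig types, for the carving
induced by the assembly `A`, form the complementary pair `{j, ι j}`. -/
def windowTypeCount {n q : ℕ} (ι : Fin q → Fin q) (A : Assembly n) (ω : Carving n q)
    (a b k : ℕ) (j : Fin q) : ℕ :=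
  (Finset.univ.filter fun x : Cell n × Cell n × Fin 2 =>
    inWindow a b k x.1 ∧ inWindow a b k x.2.1 ∧
    cellZ x.2.1 = cellZ x.1 + dirVec (x.2.2.val : ZMod 4) ∧
    (A.carving ω x.1 (x.2.2.val : ZMod 4) = j ∨
      A.carving ω x.1 (x.2.2.val : ZMod 4) = ι j)).card

open scoped Classical in
/-- The shape multiplicity of the `k × k` window at `(a, b)`: the sum, over unordered
complementary pairs `J = {j, ι j}`, of `⌊(number of dual edges of the window of type J)/2⌋`. -/
def windowSM {n q : ℕ} (ι : Fin q → Fin q) (A : Assembly n) (ω : Carving n q)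
    (a b k : ℕ) : ℕ :=
  ∑ j ∈ Finset.univ.filter (fun j : Fin q => j ≤ ι j),
    windowTypeCount ι A ω a b k j / 2

/-- A feasible complete assembly is `k`-good if every `k × k` window touching the boundary
of the puzzle has shape multiplicity at most `1`, and every other `k × k` window has shape
multiplicity at most `2`. -/
def KGood {n q : ℕ} (ι : Fin q → Fin q) (A : Assembly n) (ω : Carving n q) (k : ℕ) :
    Prop :=
  A.Feasible ι ω ∧
    ∀ a b : ℕ, a + k ≤ n → b + k ≤ n →
      windowSM ι A ω a b k ≤ 2 ∧
      ((a = 0 ∨ b = 0 ∨ a + k = n ∨ b + k = n) → windowSM ι A ω a b k ≤ 1)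

/-- A partial assembly: an injective placement of a subset of the pieces into the square
grid `ℤ²`, together with an orientation for each placed piece. -/
structure PartialAssembly (n : ℕ) where
  pieces : Finset (Cell n)
  pos : Cell n → ℤ × ℤ
  rot : Cell n → ZMod 4
  pos_inj : ∀ p ∈ pieces, ∀ p' ∈ pieces, pos p = pos p' → p = p'

/-- A partial assembly is feasible for `ω` if all pairs of abutting sides carry
complementary jig types. -/
def PartialAssembly.Feasible {n q : ℕ} (ι : Fin q → Fin q) (A : PartialAssembly n)
    (ω : Carving n q) : Prop :=
  ∀ p ∈ A.pieces, ∀ p' ∈ A.pieces, ∀ d : ZMod 4,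
    A.pos p' = A.pos p + dirVec d →
    ω p' (d + 2 - A.rot p') = ι (ω p (d - A.rot p))

open scoped Classical in
/-- The edges of the contour graph `C(A)`: the dual edges of `A` (each recorded once, as
`(p, p', d)` with `d ∈ {right, up}`, `p'` being placed in direction `d` from `p`) whose two
abutting piece sides are not coincident in the planted assembly. -/
def contourEdges {n : ℕ} (A : PartialAssembly n) : Finset (Cell n × Cell n × Fin 2) :=
  Finset.univ.filter fun x =>
    x.1 ∈ A.pieces ∧ x.2.1 ∈ A.pieces ∧
    A.pos x.2.1 = A.pos x.1 + dirVec (x.2.2.val : ZMod 4) ∧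
    ¬ (A.rot x.2.1 = A.rot x.1 ∧
        cellZ x.2.1 = cellZ x.1 + dirVec ((x.2.2.val : ZMod 4) - A.rot x.1))

/-- The piece sides lying across the edges of the contour graph of `A`. -/
def crossingSides {n : ℕ} (A : PartialAssembly n) : Set (Cell n × ZMod 4) :=
  {ps | ∃ x ∈ contourEdges A,
    ps = (x.1, (x.2.2.val : ZMod 4) - A.rot x.1) ∨
    ps = (x.2.1, (x.2.2.val : ZMod 4) + 2 - A.rot x.2.1)}

/-- Two piece sides are coincident in the planted assembly. -/
def CoincidentPlanted {n : ℕ} (ps ps' : Cell n × ZMod 4) : Prop :=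
  cellZ ps'.1 = cellZ ps.1 + dirVec ps.2 ∧ ps'.2 = ps.2 + 2

open scoped Classical in
/-- The shape multiplicity `sm(C(A), ω)` of the contour graph of `A` with respect to `ω`:
the sum, over unordered complementary pairs `J = {j, ι j}`, of
`⌊(number of contour edges of type J)/2⌋`. -/
def contourSM {n q : ℕ} (ι : Fin q → Fin q) (A : PartialAssembly n) (ω : Carving n q) :
    ℕ :=
  ∑ j ∈ Finset.univ.filter (fun j : Fin q => j ≤ ι j),
    ((contourEdges A).filter fun x =>
      ω x.1 ((x.2.2.val : ZMod 4) - A.rot x.1) = j ∨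
      ω x.1 ((x.2.2.val : ZMod 4) - A.rot x.1) = ι j).card / 2

end

namespace S0

variable {q : ℕ}

/-- piece shape -/
abbrev Sh (q : ℕ) := ZMod 4 → Fin q

def shf (f : Sh q) (s : ZMod 4) : Sh q := fun d => f (d + s)

lemma shf_shf (f : Sh q) (s t : ZMod 4) : shf (shf f s) t = shf f (t + s) := by
  funext d; simp [shf, add_assoc]

lemma shf_zero (f : Sh q) : shf f 0 = f := by funext d; simp [shf]

def orb (f : Sh q) : Finset (Sh q) := (univ : Finset (ZMod 4)).image (shf f)

lemma mem_orb {f g : Sh q} : g ∈ orb f ↔ ∃ s, g = shf f s := by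
  simp [orb, eq_comm]

lemma self_mem_orb (f : Sh q) : f ∈ orb f := mem_orb.mpr ⟨0, (shf_zero f).symm⟩

lemma orb_shf (f : Sh q) (s : ZMod 4) : orb (shf f s) = orb f := by
  ext g
  simp only [mem_orb]
  constructor
  · rintro ⟨t, rfl⟩; exact ⟨t + s, by rw [shf_shf]⟩
  · rintro ⟨t, rfl⟩
    exact ⟨t - s, by rw [shf_shf, sub_add_cancel]⟩

lemma orb_eq_of_mem {f g : Sh q} (h : g ∈ orb f) : orb g = orb f := by
  obtain ⟨s, rfl⟩ := mem_orb.mp h; exact orb_shf f s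

lemma zmod4_cases (d : ZMod 4) : d = 0 ∨ d = 1 ∨ d = 2 ∨ d = 3 := by revert d; decide

/-- shapes invariant under 180° rotation -/
def P2 (q : ℕ) : Finset (Sh q) := univ.filter (fun f => shf f 2 = f)

lemma card_P2 : (P2 q).card ≤ q ^ 2 := by
  have h : (P2 q).card ≤ (univ : Finset (Fin q × Fin q)).card := by
    apply Finset.card_le_card_of_injOn (fun f => (f 0, f 1)) (fun _ _ => mem_univ _)
    intro f hf g hg hfg
    have hf2 : ∀ d, f (d + 2) = f d := fun d => congrFun ((mem_filter.mp hf).2) d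
    have hg2 : ∀ d, g (d + 2) = g d := fun d => congrFun ((mem_filter.mp hg).2) d
    have h0 : f 0 = g 0 := congrArg Prod.fst hfg
    have h1 : f 1 = g 1 := congrArg Prod.snd hfg
    funext d
    rcases zmod4_cases d with rfl | rfl | rfl | rfl
    · exact h0
    · exact h1
    · have := hf2 0; have := hg2 0
      calc f 2 = f (0 + 2) := by norm_num
        _ = f 0 := hf2 0
        _ = g 0 := h0
        _ = g (0 + 2) := (hg2 0).symm
        _ = g 2 := by norm_num
    · calc f 3 = f (1 + 2) := by norm_num
        _ = f 1 := hf2 1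
        _ = g 1 := h1
        _ = g (1 + 2) := (hg2 1).symm
        _ = g 3 := by norm_num
  simpa [sq] using h

lemma shf_ne_of_card {f : Sh q} (hf : shf f 2 ≠ f) : (orb f).card = 4 := by
  rw [orb, Finset.card_image_of_injOn]
  · simp
  intro s _ t _ hst
  by_contra hne
  have key : ∀ u : ZMod 4, u ≠ 0 → shf f u = f → False := by
    intro u hu hfu
    rcases zmod4_cases u with rfl | rfl | rfl | rfl
    · exact hu rfl
    · apply hf
      have h2 : shf f 2 = shf (shf f 1) 1 := by rw [shf_shf]; norm_num
      rw [h2, hfu, hfu]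
    · exact hf hfu
    · apply hf
      have h2 : shf f 2 = shf (shf f 3) 3 := by
        rw [shf_shf]; congr 1
      rw [h2, hfu, hfu]
  -- from shf f s = shf f t derive shf f (t - s) = f
  have : shf f (s - t) = f := by
    have := congrArg (fun g => shf g (-t)) hst
    simpa [shf_shf, sub_eq_neg_add, shf_zero] using this
  exact key (s - t) (sub_ne_zero.mpr (fun h => hne h)) this

/-- the set of shape-orbits -/
def orbs (q : ℕ) : Finset (Finset (Sh q)) := (univ : Finset (Sh q)).image orb

lemma orb_card_le (f : Sh q) : (orb f).card ≤ 4 := by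
  calc (orb f).card ≤ (univ : Finset (ZMod 4)).card := Finset.card_image_le
    _ = 4 := by simp

lemma sum_orbs_card : ∑ O ∈ orbs q, O.card = q ^ 4 := by
  classical
  have hdisj : ∀ O ∈ orbs q, ∀ O' ∈ orbs q, O ≠ O' → Disjoint O O' := by
    intro O hO O' hO' hne
    obtain ⟨f, -, rfl⟩ := Finset.mem_image.mp hO
    obtain ⟨g, -, rfl⟩ := Finset.mem_image.mp hO'
    rw [Finset.disjoint_left]
    intro x hx hx'
    exact hne ((orb_eq_of_mem hx).symm.trans (orb_eq_of_mem hx'))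
  have hunion : ((orbs q).biUnion fun x => x) = univ := by
    apply Finset.eq_univ_iff_forall.mpr
    intro f
    exact Finset.mem_biUnion.mpr ⟨orb f, Finset.mem_image_of_mem _ (mem_univ f), self_mem_orb f⟩
  have := Finset.card_biUnion hdisj
  rw [hunion] at this
  rw [← this]
  simp [Fintype.card_fun]

lemma four_mul_card_orbs_le : 4 * (orbs q).card ≤ q ^ 4 + 3 * q ^ 2 := by
  classical
  set p : Finset (Sh q) → Prop := fun O => (O ∩ P2 q).Nonempty with hp
  have hsplit : ∀ O ∈ orbs q, 4 = O.card + (4 - O.card) := by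
    intro O hO
    obtain ⟨f, -, rfl⟩ := Finset.mem_image.mp hO
    have := orb_card_le f
    omega
  have h1 : 4 * (orbs q).card = ∑ O ∈ orbs q, O.card + ∑ O ∈ orbs q, (4 - O.card) := by
    rw [← Finset.sum_add_distrib]
    rw [mul_comm, Finset.card_eq_sum_ones, Finset.sum_mul, one_mul]
    apply Finset.sum_congr rfl
    intro O hO
    exact hsplit O hO
  have h2 : ∑ O ∈ orbs q, (4 - O.card) ≤ ∑ O ∈ orbs q, (if p O then 3 else 0) := by
    apply Finset.sum_le_sum
    intro O hO
    by_cases hPO : p O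
    · rw [if_pos hPO]
      obtain ⟨f, -, rfl⟩ := Finset.mem_image.mp hO
      have : 1 ≤ (orb f).card := Finset.card_pos.mpr ⟨f, self_mem_orb f⟩
      omega
    · rw [if_neg hPO]
      obtain ⟨f, -, rfl⟩ := Finset.mem_image.mp hO
      have hf : shf f 2 ≠ f := by
        intro hc
        exact hPO ⟨f, Finset.mem_inter.mpr ⟨self_mem_orb f, Finset.mem_filter.mpr ⟨mem_univ f, hc⟩⟩⟩
      rw [shf_ne_of_card hf]
  have h3 : ∑ O ∈ orbs q, (if p O then 3 else 0) = 3 * ((orbs q).filter p).card := by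
    rw [← Finset.sum_filter]
    simp [mul_comm]
  have h4 : ((orbs q).filter p).card ≤ (P2 q).card := by
    apply Finset.card_le_card_of_surjOn orb
    intro O hO
    have hO' : O ∈ (orbs q).filter p := hO
    have hO1 := (Finset.mem_filter.mp hO').1
    obtain ⟨f, hf⟩ := (Finset.mem_filter.mp hO').2
    have hfO : f ∈ O := (Finset.mem_inter.mp hf).1
    have hfP : f ∈ P2 q := (Finset.mem_inter.mp hf).2
    refine ⟨f, hfP, ?_⟩
    obtain ⟨g, -, rfl⟩ := Finset.mem_image.mp hO1
    exact orb_eq_of_mem hfO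
  calc 4 * (orbs q).card = ∑ O ∈ orbs q, O.card + ∑ O ∈ orbs q, (4 - O.card) := h1
    _ ≤ q ^ 4 + 3 * (P2 q).card := by
        rw [sum_orbs_card]
        exact Nat.add_le_add le_rfl ((h2.trans_eq h3).trans (Nat.mul_le_mul_left 3 h4))
    _ ≤ q ^ 4 + 3 * q ^ 2 := Nat.add_le_add le_rfl (Nat.mul_le_mul_left 3 card_P2)


section Tag

variable {α : Type*} (ρ : α → α) (ν : α → ℕ)

def M (x : α) : Finset ℕ :=
  (range 4).filter fun k => ∀ j ∈ range 4, ν (ρ^[k] x) ≤ ν (ρ^[j] x)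

lemma M_nonempty (x : α) : (M ρ ν x).Nonempty := by
  obtain ⟨k, hk, hmin⟩ := Finset.exists_min_image (range 4) (fun k => ν (ρ^[k] x))
    ⟨0, by simp⟩
  exact ⟨k, Finset.mem_filter.mpr ⟨hk, hmin⟩⟩

noncomputable def tag (x : α) : ℕ := (M ρ ν x).min' (M_nonempty ρ ν x)

lemma tag_mem (x : α) : tag ρ ν x ∈ M ρ ν x := Finset.min'_mem _ _

lemma tag_lt_four (x : α) : tag ρ ν x < 4 :=
  Finset.mem_range.mp (Finset.mem_filter.mp (tag_mem ρ ν x)).1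

lemma tag_spec (x : α) : ∀ j ∈ range 4, ν (ρ^[tag ρ ν x] x) ≤ ν (ρ^[j] x) :=
  (Finset.mem_filter.mp (tag_mem ρ ν x)).2

noncomputable def canon (x : α) : α := ρ^[tag ρ ν x] x

variable {ρ}

lemma iter_mod (hρ : ρ^[4] = id) (k : ℕ) (x : α) : ρ^[k] x = ρ^[k % 4] x := by
  conv_lhs => rw [← Nat.div_add_mod k 4]
  rw [Function.iterate_add_apply, Function.iterate_mul, hρ]
  simp

def orbF [DecidableEq α] (x : α) : Finset α := (range 4).image fun k => ρ^[k] x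

lemma mem_orbF [DecidableEq α] {x y : α} : y ∈ orbF (ρ := ρ) x ↔ ∃ k < 4, ρ^[k] x = y := by
  simp [orbF]

lemma orbF_eq [DecidableEq α] (hρ : ρ^[4] = id) {x y : α} {r : ℕ}
    (h : y = ρ^[r] x) : orbF (ρ := ρ) x = orbF (ρ := ρ) y := by
  ext z
  simp only [mem_orbF]
  constructor
  · rintro ⟨k, hk, rfl⟩
    refine ⟨(k + (4 - r % 4)) % 4, Nat.mod_lt _ (by norm_num), ?_⟩
    rw [← iter_mod hρ ((k + (4 - r % 4))) y, h, ← Function.iterate_add_apply,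
      iter_mod hρ (k + (4 - r % 4) + r) x, iter_mod hρ k x]
    congr 1
    omega
  · rintro ⟨k, hk, rfl⟩
    rw [h, ← Function.iterate_add_apply]
    exact ⟨(k + r) % 4, Nat.mod_lt _ (by norm_num), (iter_mod hρ _ x).symm⟩

lemma canon_recover (hρ : ρ^[4] = id) (x : α) :
    ρ^[4 - tag ρ ν x] (canon ρ ν x) = x := by
  rw [canon, ← Function.iterate_add_apply,
    Nat.sub_add_cancel (le_of_lt (tag_lt_four ρ ν x)), hρ]
  rfl

lemma tag_recover_inj [DecidableEq α] (hρ : ρ^[4] = id) (hν : Function.Injective ν)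
    {x y : α} {r : ℕ} (hy : y = ρ^[r] x) (ht : tag ρ ν x = tag ρ ν y) : x = y := by
  have horb : orbF (ρ := ρ) x = orbF (ρ := ρ) y := orbF_eq hρ hy
  have hcx : canon ρ ν x ∈ orbF (ρ := ρ) x :=
    mem_orbF.mpr ⟨tag ρ ν x, tag_lt_four ρ ν x, rfl⟩
  have hcy : canon ρ ν y ∈ orbF (ρ := ρ) x := by
    rw [horb]; exact mem_orbF.mpr ⟨tag ρ ν y, tag_lt_four ρ ν y, rfl⟩
  have h1 : ν (canon ρ ν x) ≤ ν (canon ρ ν y) := by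
    obtain ⟨k, hk, hke⟩ := mem_orbF.mp hcy
    rw [← hke]
    exact tag_spec ρ ν x k (Finset.mem_range.mpr hk)
  have h2 : ν (canon ρ ν y) ≤ ν (canon ρ ν x) := by
    have hcx' : canon ρ ν x ∈ orbF (ρ := ρ) y := by rw [← horb]; exact hcx
    obtain ⟨k, hk, hke⟩ := mem_orbF.mp hcx'
    rw [← hke]
    exact tag_spec ρ ν y k (Finset.mem_range.mpr hk)
  have hc : canon ρ ν x = canon ρ ν y := hν (le_antisymm h1 h2)
  calc x = ρ^[4 - tag ρ ν x] (canon ρ ν x) := (canon_recover (ν := ν) hρ x).symm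
    _ = ρ^[4 - tag ρ ν y] (canon ρ ν y) := by rw [hc, ht]
    _ = y := canon_recover (ν := ν) hρ y

end Tag

/-- If two functions on a fintype induce the same multiset of values, they differ by a
permutation of the domain. -/
lemma exists_perm {α β : Type*} [Fintype α] [DecidableEq α] [DecidableEq β]
    {f g : α → β} (h : Multiset.map f Finset.univ.val = Multiset.map g Finset.univ.val) :
    ∃ σ : Equiv.Perm α, ∀ a, f (σ a) = g a := by
  classical
  have key : ∀ (u : α → β) (b : β),
      Fintype.card {a // u a = b} = Multiset.count b (Multiset.map u Finset.univ.val) := by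
    intro u b
    rw [Fintype.card_subtype, Multiset.count_map]
    have h1 : (Finset.univ.filter fun a => u a = b).val
        = Multiset.filter (fun a => u a = b) Finset.univ.val := Finset.filter_val _ _
    have h2 : Multiset.filter (fun a => b = u a) Finset.univ.val
        = Multiset.filter (fun a => u a = b) Finset.univ.val :=
      Multiset.filter_congr (fun a _ => by rw [eq_comm])
    rw [h2, ← h1]
    rfl
  have hcard : ∀ b : β, Fintype.card {a // f a = b} = Fintype.card {a // g a = b} := by
    intro b
    rw [key f b, key g b, h]
  let e : ∀ b, {a // f a = b} ≃ {a // g a = b} := fun b => Fintype.equivOfCardEq (hcard b)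
  refine ⟨(Equiv.sigmaFiberEquiv g).symm.trans
    ((Equiv.sigmaCongrRight fun b => (e b).symm).trans (Equiv.sigmaFiberEquiv f)), ?_⟩
  intro a
  exact ((e (g a)).symm ⟨a, rfl⟩).2


variable {n q : ℕ}

lemma rotCell_symm_apply (c : Cell n) : (rotCell.symm c) = (c.2, c.1.rev) := rfl

lemma rotate4 : (rotateCarving (n := n) (q := q))^[4] = id := by
  funext ω
  show rotateCarving (rotateCarving (rotateCarving (rotateCarving ω))) = ω
  funext c d
  simp only [rotateCarving, rotCell_symm_apply, Fin.rev_rev]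
  have hd : d - 1 - 1 - 1 - 1 = d := by ring_nf; simp [show ((4 : ZMod 4)) = 0 from rfl]
  rw [hd]

lemma planted_carving (ω : Carving n q) : (planted n).carving ω = ω := by
  funext c d
  simp [planted, Assembly.carving]

lemma feasible_iff (ι : Fin q → Fin q) (A : Assembly n) (ω : Carving n q) :
    A.Feasible ι ω ↔ IsValidCarving ι (A.carving ω) := by
  constructor
  · intro h c c' d hcc
    have := h (A.pos.symm c) (A.pos.symm c') d
      (by simpa [Equiv.apply_symm_apply] using hcc)
    simpa [Assembly.carving] using this
  · intro h p p' d hpp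
    have := h (A.pos p) (A.pos p') d hpp
    simpa [Assembly.carving, Equiv.symm_apply_apply] using this

lemma planted_feasible {ι : Fin q → Fin q} {ω : Carving n q} (h : IsValidCarving ι ω) :
    (planted n).Feasible ι ω := by
  rw [feasible_iff, planted_carving]
  exact h


/-- Build a valid carving from free data: the values of all right/up sides, plus the
left sides of the left column and the bottom sides of the bottom row. -/
def build (ι : Fin q → Fin q) (f : (Fin n × Fin n) × Fin 2 → Fin q)
    (g : Fin n × Fin 2 → Fin q) : Carving n q := fun p d =>
  if d = 0 then f (p, 0)
  else if d = 1 then f (p, 1)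
  else if d = 2 then
    (if p.1.val = 0 then g (p.2, 0)
     else ι (f ((⟨p.1.val - 1, lt_of_le_of_lt (Nat.sub_le _ _) p.1.isLt⟩, p.2), 0)))
  else
    (if p.2.val = 0 then g (p.1, 1)
     else ι (f ((p.1, ⟨p.2.val - 1, lt_of_le_of_lt (Nat.sub_le _ _) p.2.isLt⟩), 1)))

lemma build_e0 (ι : Fin q → Fin q) (f) (g) (p : Cell n) :
    build ι f g p 0 = f (p, 0) := by simp [build]

lemma build_e1 (ι : Fin q → Fin q) (f) (g) (p : Cell n) :
    build ι f g p 1 = f (p, 1) := by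
  rw [build, if_neg (by decide), if_pos rfl]

lemma build_e2 (ι : Fin q → Fin q) (f) (g) (p : Cell n) (h : p.1.val ≠ 0) :
    build ι f g p 2 = ι (f ((⟨p.1.val - 1,
      lt_of_le_of_lt (Nat.sub_le _ _) p.1.isLt⟩, p.2), 0)) := by
  rw [build, if_neg (by decide), if_neg (by decide), if_pos rfl, if_neg h]

lemma build_e2' (ι : Fin q → Fin q) (f) (g) (p : Cell n) (h : p.1.val = 0) :
    build ι f g p 2 = g (p.2, 0) := by
  rw [build, if_neg (by decide), if_neg (by decide), if_pos rfl, if_pos h]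

lemma build_e3 (ι : Fin q → Fin q) (f) (g) (p : Cell n) (h : p.2.val ≠ 0) :
    build ι f g p 3 = ι (f ((p.1, ⟨p.2.val - 1,
      lt_of_le_of_lt (Nat.sub_le _ _) p.2.isLt⟩), 1)) := by
  rw [build, if_neg (by decide), if_neg (by decide), if_neg (by decide), if_neg h]

lemma build_e3' (ι : Fin q → Fin q) (f) (g) (p : Cell n) (h : p.2.val = 0) :
    build ι f g p 3 = g (p.1, 1) := by
  rw [build, if_neg (by decide), if_neg (by decide), if_neg (by decide), if_pos h]

lemma cellZ_fst (c : Cell n) : (cellZ c).1 = (c.1.val : ℤ) := rfl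
lemma cellZ_snd (c : Cell n) : (cellZ c).2 = (c.2.val : ℤ) := rfl

lemma build_valid (ι : Fin q → Fin q) (hι : ι ∘ ι = id)
    (f : (Fin n × Fin n) × Fin 2 → Fin q) (g : Fin n × Fin 2 → Fin q) :
    IsValidCarving ι (build ι f g) := by
  have hιι : ∀ x, ι (ι x) = x := fun x => congrFun hι x
  intro p p' d hd
  rcases zmod4_cases d with rfl | rfl | rfl | rfl
  · -- d = 0 : p' is to the right of p
    rw [show dirVec (0 : ZMod 4) = (1, 0) from rfl, Prod.ext_iff] at hd
    obtain ⟨hd1, hd2⟩ := hd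
    simp only [cellZ, Prod.fst_add, Prod.snd_add] at hd1 hd2
    have h1 : p'.1.val = p.1.val + 1 := by exact_mod_cast hd1
    have h2 : p'.2 = p.2 := Fin.ext (by exact_mod_cast hd2)
    rw [show (0 : ZMod 4) + 2 = 2 from rfl, build_e0, build_e2 ι f g p' (by omega)]
    have e1 : (⟨p'.1.val - 1, lt_of_le_of_lt (Nat.sub_le _ _) p'.1.isLt⟩ : Fin n) = p.1 :=
      Fin.ext (by simp [h1])
    rw [e1, h2]
  · -- d = 1 : p' is above p
    rw [show dirVec (1 : ZMod 4) = (0, 1) from rfl, Prod.ext_iff] at hd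
    obtain ⟨hd1, hd2⟩ := hd
    simp only [cellZ, Prod.fst_add, Prod.snd_add] at hd1 hd2
    have h1 : p'.1 = p.1 := Fin.ext (by exact_mod_cast hd1)
    have h2 : p'.2.val = p.2.val + 1 := by exact_mod_cast hd2
    rw [show (1 : ZMod 4) + 2 = 3 from rfl, build_e1, build_e3 ι f g p' (by omega)]
    have e1 : (⟨p'.2.val - 1, lt_of_le_of_lt (Nat.sub_le _ _) p'.2.isLt⟩ : Fin n) = p.2 :=
      Fin.ext (by simp [h2])
    rw [e1, h1]
  · -- d = 2 : p' is to the left of p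
    rw [show dirVec (2 : ZMod 4) = (-1, 0) from rfl, Prod.ext_iff] at hd
    obtain ⟨hd1, hd2⟩ := hd
    simp only [cellZ, Prod.fst_add, Prod.snd_add] at hd1 hd2
    have hd1' : (p'.1.val : ℤ) = (p.1.val : ℤ) + (-1) := by exact_mod_cast hd1
    have h1 : p.1.val = p'.1.val + 1 := by omega
    have h2 : p'.2 = p.2 := Fin.ext (by exact_mod_cast hd2)
    rw [show (2 : ZMod 4) + 2 = 0 from rfl, build_e0, build_e2 ι f g p (by omega), hιι]
    have e1 : (⟨p.1.val - 1, lt_of_le_of_lt (Nat.sub_le _ _) p.1.isLt⟩ : Fin n) = p'.1 :=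
      Fin.ext (by simp [h1])
    rw [e1, ← h2]
  · -- d = 3 : p' is below p
    rw [show dirVec (3 : ZMod 4) = (0, -1) from rfl, Prod.ext_iff] at hd
    obtain ⟨hd1, hd2⟩ := hd
    simp only [cellZ, Prod.fst_add, Prod.snd_add] at hd1 hd2
    have h1 : p'.1 = p.1 := Fin.ext (by exact_mod_cast hd1)
    have hd2' : (p'.2.val : ℤ) = (p.2.val : ℤ) + (-1) := by exact_mod_cast hd2
    have h2 : p.2.val = p'.2.val + 1 := by omega
    rw [show (3 : ZMod 4) + 2 = 1 from rfl, build_e1, build_e3 ι f g p (by omega), hιι]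
    have e1 : (⟨p.2.val - 1, lt_of_le_of_lt (Nat.sub_le _ _) p.2.isLt⟩ : Fin n) = p'.2 :=
      Fin.ext (by simp [h2])
    rw [e1, ← h1]

open scoped Classical in
lemma valid_card_ge (hn : 0 < n) (ι : Fin q → Fin q) (hι : ι ∘ ι = id) :
    q ^ (n * n * 2 + n * 2) ≤
      ((Finset.univ.filter fun ω : Carving n q => IsValidCarving ι ω)).card := by
  classical
  set Dom := (((Fin n × Fin n) × Fin 2 → Fin q) × (Fin n × Fin 2 → Fin q))
  have hinj : Set.InjOn (fun fg : Dom => build ι fg.1 fg.2) ↑(Finset.univ : Finset Dom) := by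
    rintro ⟨f, g⟩ - ⟨f', g'⟩ - h
    have hf : f = f' := by
      funext x
      obtain ⟨p, i⟩ := x
      fin_cases i
      · have := congrFun (congrFun h p) 0
        dsimp only at this ⊢
        rwa [build_e0, build_e0] at this
      · have := congrFun (congrFun h p) 1
        dsimp only at this ⊢
        rwa [build_e1, build_e1] at this
    have hg : g = g' := by
      funext x
      obtain ⟨a, i⟩ := x
      fin_cases i
      · have := congrFun (congrFun h ((⟨0, hn⟩ : Fin n), a)) 2
        dsimp only at this ⊢
        rwa [build_e2' ι f g ((⟨0, hn⟩ : Fin n), a) rfl,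
          build_e2' ι f' g' ((⟨0, hn⟩ : Fin n), a) rfl] at this
      · have := congrFun (congrFun h (a, (⟨0, hn⟩ : Fin n))) 3
        dsimp only at this ⊢
        rwa [build_e3' ι f g (a, (⟨0, hn⟩ : Fin n)) rfl,
          build_e3' ι f' g' (a, (⟨0, hn⟩ : Fin n)) rfl] at this
    rw [hf, hg]
  have hmaps : ∀ fg ∈ (Finset.univ : Finset Dom),
      build ι fg.1 fg.2 ∈ (Finset.univ.filter fun ω : Carving n q => IsValidCarving ι ω) :=
    fun fg _ => Finset.mem_filter.mpr ⟨Finset.mem_univ _, build_valid ι hι fg.1 fg.2⟩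
  have hcard := Finset.card_le_card_of_injOn _ hmaps hinj
  calc q ^ (n * n * 2 + n * 2) = Fintype.card Dom := by
        simp only [Dom, Fintype.card_prod, Fintype.card_fun, Fintype.card_fin, pow_add]
    _ = (Finset.univ : Finset Dom).card := Finset.card_univ.symm
    _ ≤ _ := hcard


open scoped Classical in
lemma bad_card_le (n q : ℕ) (ι : Fin q → Fin q) :
    ((Finset.univ.filter fun ω : Carving n q => IsValidCarving ι ω ∧
        ¬ ∃ A B : Assembly n, A.Feasible ι ω ∧ B.Feasible ι ω ∧ ¬ PuzzleSimilar A B ω)).card ≤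
      4 * (((orbs q).card + n * n - 1).choose (n * n)) := by
  classical
  set ν : Carving n q → ℕ := fun ω => ((Fintype.equivFin (Carving n q)) ω : ℕ) with hνdef
  have hν : Function.Injective ν := by
    intro a b hab
    exact (Fintype.equivFin (Carving n q)).injective (Fin.val_injective hab)
  have hρ : (rotateCarving (n := n) (q := q))^[4] = id := rotate4
  have hm : ∀ ω : Carving n q,
      (Multiset.map (fun p => (⟨orb (ω p), Finset.mem_image_of_mem _ (Finset.mem_univ _)⟩ :
        {O : Finset (Sh q) // O ∈ orbs q})) Finset.univ.val).card = n * n := by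
    intro ω
    rw [Multiset.card_map, ← Finset.card_def, Finset.card_univ]
    simp
  set bag : Carving n q → Sym {O : Finset (Sh q) // O ∈ orbs q} (n * n) :=
    fun ω => ⟨_, hm ω⟩ with hbagdef
  have key := Finset.card_le_card_of_injOn
    (f := fun ω : Carving n q => (bag ω, tag rotateCarving ν ω))
    (s := (Finset.univ.filter fun ω : Carving n q => IsValidCarving ι ω ∧
        ¬ ∃ A B : Assembly n, A.Feasible ι ω ∧ B.Feasible ι ω ∧ ¬ PuzzleSimilar A B ω))
    (t := (Finset.univ : Finset (Sym {O : Finset (Sh q) // O ∈ orbs q} (n * n))) ×ˢ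
      (Finset.range 4))
    (fun ω _ => Finset.mem_product.mpr
      ⟨Finset.mem_univ _, Finset.mem_range.mpr (tag_lt_four _ ν ω)⟩) ?_
  · calc _ ≤ ((Finset.univ : Finset (Sym {O : Finset (Sh q) // O ∈ orbs q} (n * n))) ×ˢ
        (Finset.range 4)).card := key
      _ = 4 * (((orbs q).card + n * n - 1).choose (n * n)) := by
        rw [Finset.card_product, Finset.card_univ, Finset.card_range,
          Sym.card_sym_eq_choose, Fintype.card_coe, mul_comm]
  · -- injectivity
    intro ω hω ω' hω' hG
    simp only [Finset.coe_filter, Set.mem_setOf_eq, Finset.mem_univ, true_and] at hω hω'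
    have hbag : bag ω = bag ω' := congrArg Prod.fst hG
    have htag : tag rotateCarving ν ω = tag rotateCarving ν ω' := congrArg Prod.snd hG
    -- extract multiset equality
    have hms : Multiset.map (fun p => orb (ω p)) Finset.univ.val
        = Multiset.map (fun p => orb (ω' p)) Finset.univ.val := by
      have h1 := congrArg (fun z => Multiset.map Subtype.val z.val) hbag
      simpa [hbagdef, Multiset.map_map, Function.comp] using h1
    obtain ⟨σ, hσ⟩ := exists_perm hms
    have hmem : ∀ p, ω' p ∈ orb (ω (σ p)) := fun p => (hσ p) ▸ self_mem_orb (ω' p)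
    choose sh hs using fun p => mem_orb.mp (hmem p)
    set B : Assembly n := ⟨σ.symm, fun pc => - sh (σ.symm pc)⟩ with hBdef
    have hB : B.carving ω = ω' := by
      funext c d
      rw [hs c]
      simp [Assembly.carving, hBdef, shf, sub_neg_eq_add]
    have hfeas : B.Feasible ι ω := by
      rw [feasible_iff, hB]
      exact hω'.1
    have hplant : (planted n).Feasible ι ω := planted_feasible hω.1
    have hsim : PuzzleSimilar (planted n) B ω := by
      by_contra hS
      exact hω.2 ⟨planted n, B, hplant, hfeas, hS⟩
    obtain ⟨r, hr⟩ := hsim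
    rw [planted_carving, hB] at hr
    exact tag_recover_inj (ν := ν) (ρ := rotateCarving) hρ hν hr htag

open Filter in
set_option maxHeartbeats 1000000 in
lemma analytic {ε : ℝ} (hε : 0 < ε) :
    ∀ᶠ n : ℕ in atTop, ∀ Q K : ℕ, 2 ≤ Q → (Q : ℝ) ≤ 2 / Real.sqrt (Real.exp 1) * n →
      4 * K ≤ Q ^ 4 + 3 * Q ^ 2 →
      (4 : ℝ) * ((K + n * n - 1).choose (n * n)) < ε * (Q : ℝ) ^ (n * n * 2 + n * 2) := by
  have hT1 : Filter.Tendsto (fun n : ℕ => (4 : ℝ) * (4 / 5) ^ n) atTop (nhds 0) := by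
    have := (tendsto_pow_atTop_nhds_zero_of_lt_one
      (by norm_num : (0:ℝ) ≤ 4/5) (by norm_num : (4/5:ℝ) < 1)).const_mul (4:ℝ)
    simpa using this
  have hT2 : Filter.Tendsto (fun n : ℕ => (4 : ℝ) * (Real.exp (1/2) / 4) ^ n) atTop (nhds 0) := by
    have hlt : Real.exp (1/2) / 4 < 1 := by
      have h1 : Real.exp (1/2 : ℝ) < Real.exp 1 := Real.exp_lt_exp.mpr (by norm_num)
      have h2 : Real.exp 1 < 2.7182818286 := Real.exp_one_lt_d9
      nlinarith
    have hge : (0:ℝ) ≤ Real.exp (1/2) / 4 := by positivity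
    have := (tendsto_pow_atTop_nhds_zero_of_lt_one hge hlt).const_mul (4:ℝ)
    simpa using this
  have hev1 : ∀ᶠ n : ℕ in atTop, (4 : ℝ) * (4 / 5) ^ n < ε :=
    hT1.eventually (gt_mem_nhds hε)
  have hev2 : ∀ᶠ n : ℕ in atTop, (4 : ℝ) * (Real.exp (1/2) / 4) ^ n < ε :=
    hT2.eventually (gt_mem_nhds hε)
  filter_upwards [hev1, hev2, eventually_ge_atTop 400] with n hn1 hn2 hn400
  intro Q K hQ2 hQle hK
  have hn0 : (400 : ℝ) ≤ (n : ℝ) := by exact_mod_cast hn400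
  have hnpos : (0:ℝ) < n := by linarith
  set m : ℕ := n * n with hmdef
  clear_value m
  have hmR : (m : ℝ) = (n : ℝ) * (n : ℝ) := by rw [hmdef]; push_cast; ring
  have hmpos : (0:ℝ) < (m:ℝ) := by rw [hmR]; positivity
  have hQR : (2:ℝ) ≤ (Q:ℝ) := by exact_mod_cast hQ2
  have hQsq : (4:ℝ) ≤ (Q:ℝ)^2 := by nlinarith
  have hQpos : (0:ℝ) < (Q:ℝ)^2 := by positivity
  have he0 : (0:ℝ) < Real.exp 1 := Real.exp_pos 1
  have heU : Real.exp 1 < 2.7182818286 := Real.exp_one_lt_d9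
  have hsqn : Real.sqrt n * Real.sqrt n = (n:ℝ) := Real.mul_self_sqrt (by positivity)
  have hs20 : (20:ℝ) ≤ Real.sqrt n := by
    rw [show (20:ℝ) = Real.sqrt 400 by
      rw [show (400:ℝ) = 20^2 by norm_num, Real.sqrt_sq (by norm_num)]]
    exact Real.sqrt_le_sqrt hn0
  have hspos : (0:ℝ) < Real.sqrt n := by linarith
  have hsn2 : Real.sqrt n ≤ (n:ℝ) / 20 := by
    rw [le_div_iff₀ (by norm_num : (0:ℝ) < 20)]
    nlinarith
  have hsn : Real.sqrt n ≤ (n:ℝ) := by nlinarith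
  have hKR : 4 * (K:ℝ) ≤ (Q:ℝ)^4 + 3 * (Q:ℝ)^2 := by exact_mod_cast hK
  -- step A : binomial bound
  have hnat : m.factorial * ((K + m - 1).choose m) ≤ (K + m)^m := by
    rw [← Nat.descFactorial_eq_factorial_mul_choose]
    exact (Nat.descFactorial_le_pow _ _).trans (Nat.pow_le_pow_left (by omega) m)
  have hR : (m.factorial : ℝ) * (((K + m - 1).choose m : ℕ) : ℝ) ≤ ((K:ℝ) + m)^m := by
    exact_mod_cast hnat
  have hfacpos : (0:ℝ) < (m.factorial : ℝ) := by exact_mod_cast m.factorial_pos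
  have hfac : ((m:ℝ))^m ≤ Real.exp 1 ^ m * (m.factorial : ℝ) := by
    have h1 : ((m:ℝ))^m / (m.factorial : ℝ) ≤ Real.exp (m : ℝ) := by
      calc ((m:ℝ))^m / (m.factorial : ℝ)
          ≤ ∑ i ∈ Finset.range (m+1), ((m:ℝ))^i / (i.factorial : ℝ) :=
            Finset.single_le_sum (f := fun i : ℕ => ((m:ℝ))^i / (i.factorial : ℝ))
              (fun i _ => by positivity) (Finset.self_mem_range_succ m)
        _ ≤ Real.exp (m:ℝ) := Real.sum_le_exp_of_nonneg (by positivity) _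
    have h2 : Real.exp ((m:ℝ)) = Real.exp 1 ^ m := by
      rw [← Real.exp_nat_mul]; norm_num
    rw [div_le_iff₀ hfacpos] at h1
    calc ((m:ℝ))^m ≤ Real.exp ((m:ℝ)) * (m.factorial : ℝ) := h1
      _ = Real.exp 1 ^ m * (m.factorial : ℝ) := by rw [h2]
  set y : ℝ := ((K:ℝ) + m) * Real.exp 1 / ((m:ℝ) * (Q:ℝ)^2) with hydef
  clear_value y
  have hy0 : 0 ≤ y := by rw [hydef]; positivity
  have hchoose : (((K + m - 1).choose m : ℕ) : ℝ) ≤ y ^ m * ((Q:ℝ)^2) ^ m := by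
    have hmm : (0:ℝ) < ((m:ℝ))^m := by positivity
    have key : (((K + m - 1).choose m : ℕ) : ℝ) * ((m:ℝ))^m
        ≤ (((K:ℝ) + m) * Real.exp 1)^m := by
      have c0 : (0:ℝ) ≤ (((K + m - 1).choose m : ℕ) : ℝ) := by positivity
      calc (((K + m - 1).choose m : ℕ) : ℝ) * ((m:ℝ))^m
          ≤ (((K + m - 1).choose m : ℕ) : ℝ) * (Real.exp 1 ^ m * (m.factorial : ℝ)) :=
            mul_le_mul_of_nonneg_left hfac c0
        _ = ((m.factorial : ℝ) * (((K + m - 1).choose m : ℕ) : ℝ)) * Real.exp 1 ^ m := by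
            ring
        _ ≤ ((K:ℝ) + m)^m * Real.exp 1 ^ m :=
            mul_le_mul_of_nonneg_right hR (by positivity)
        _ = (((K:ℝ) + m) * Real.exp 1)^m := by rw [mul_pow]
    have hyq : y * ((m:ℝ) * (Q:ℝ)^2) = ((K:ℝ) + m) * Real.exp 1 := by
      rw [hydef]; field_simp
    have expand : y ^ m * ((Q:ℝ)^2) ^ m * ((m:ℝ))^m = (((K:ℝ) + m) * Real.exp 1)^m := by
      rw [← hyq, mul_pow]; ring
    rw [← expand] at key
    exact le_of_mul_le_mul_right key hmm
  have h1n : (1:ℝ) ≤ ((Q:ℝ)^2)^n := by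
    have := pow_le_pow_left₀ (by norm_num : (0:ℝ) ≤ 1) (by linarith : (1:ℝ) ≤ (Q:ℝ)^2) n
    simpa using this
  -- main case analysis : 4 * y^m < ε * (Q²)^n
  have main : 4 * y ^ m < ε * ((Q:ℝ)^2) ^ n := by
    by_cases hcase : Q^4 ≤ n^3
    · -- small q : y ≤ 4/5
      have hc : (Q:ℝ)^4 ≤ (n:ℝ)^3 := by exact_mod_cast hcase
      have hsq : (Q:ℝ)^2 ≤ (n:ℝ) * Real.sqrt n := by
        have h1 : (Q:ℝ)^2 = Real.sqrt ((Q:ℝ)^4) := by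
          rw [show ((Q:ℝ))^4 = ((Q:ℝ)^2)^2 by ring, Real.sqrt_sq (by positivity)]
        have h2 : Real.sqrt ((n:ℝ)^3) = (n:ℝ) * Real.sqrt n := by
          rw [show ((n:ℝ))^3 = ((n:ℝ))^2 * n by ring, Real.sqrt_mul (by positivity),
            Real.sqrt_sq (by positivity)]
        rw [h1, ← h2]
        exact Real.sqrt_le_sqrt hc
      have hm16 : (160000:ℝ) ≤ (m:ℝ) := by
        rw [hmR]
        have h400 : (400:ℝ)*400 ≤ (n:ℝ)*(n:ℝ) :=
          mul_le_mul hn0 hn0 (by norm_num) (by linarith)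
        linarith
      have hy45 : y ≤ 4/5 := by
        rw [hydef, div_le_iff₀ (by positivity)]
        have e1 : (Q:ℝ)^4 ≤ (Q:ℝ)^2 * ((m:ℝ)/20) := by
          calc (Q:ℝ)^4 = (Q:ℝ)^2 * (Q:ℝ)^2 := by ring
            _ ≤ (Q:ℝ)^2 * ((n:ℝ) * Real.sqrt n) := mul_le_mul_of_nonneg_left hsq hQpos.le
            _ ≤ (Q:ℝ)^2 * ((m:ℝ)/20) := by
                apply mul_le_mul_of_nonneg_left _ hQpos.le
                rw [hmR]
                linarith [mul_le_mul_of_nonneg_left hsn2 hnpos.le]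
        have hKup : (K:ℝ) ≤ (Q:ℝ)^2 * (m:ℝ)/80 + (3/4) * (Q:ℝ)^2 := by
          linarith [hKR, e1]
        have h34 : (3/4:ℝ) * (Q:ℝ)^2 ≤ 3/640000 * ((m:ℝ) * (Q:ℝ)^2) := by
          linarith [mul_le_mul_of_nonneg_right hm16 hQpos.le]
        have hmm4 : (m:ℝ) ≤ (1/4 : ℝ) * ((m:ℝ) * (Q:ℝ)^2) := by
          linarith [mul_le_mul_of_nonneg_left hQsq hmpos.le]
        have hsum : (K:ℝ) + m ≤ (1/80 + 3/640000 + 1/4) * ((m:ℝ)*(Q:ℝ)^2) := by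
          linarith [hKup, h34, hmm4]
        calc ((K:ℝ)+m) * Real.exp 1
            ≤ ((1/80 + 3/640000 + 1/4) * ((m:ℝ)*(Q:ℝ)^2)) * Real.exp 1 :=
              mul_le_mul_of_nonneg_right hsum he0.le
          _ ≤ 4/5 * ((m:ℝ)*(Q:ℝ)^2) := by
              linarith [mul_lt_mul_of_pos_right heU (mul_pos hmpos hQpos)]
      calc 4 * y ^ m ≤ 4 * (4/5 : ℝ) ^ m := by
            have := pow_le_pow_left₀ hy0 hy45 m
            linarith
        _ ≤ 4 * (4/5 : ℝ) ^ n := by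
            have hmn : n ≤ m := by
              rw [hmdef]; exact Nat.le_mul_of_pos_left n (by omega)
            have := pow_le_pow_of_le_one (by norm_num : (0:ℝ) ≤ 4/5)
              (by norm_num : (4/5:ℝ) ≤ 1) hmn
            linarith
        _ < ε := hn1
        _ ≤ ε * ((Q:ℝ)^2) ^ n := by
            linarith [mul_le_mul_of_nonneg_left h1n hε.le]
    · -- large q
      push_neg at hcase
      have hc : (n:ℝ)^3 ≤ (Q:ℝ)^4 := by exact_mod_cast hcase.le
      have hsq : (n:ℝ) * Real.sqrt n ≤ (Q:ℝ)^2 := by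
        have h1 : (Q:ℝ)^2 = Real.sqrt ((Q:ℝ)^4) := by
          rw [show ((Q:ℝ))^4 = ((Q:ℝ)^2)^2 by ring, Real.sqrt_sq (by positivity)]
        have h2 : Real.sqrt ((n:ℝ)^3) = (n:ℝ) * Real.sqrt n := by
          rw [show ((n:ℝ))^3 = ((n:ℝ))^2 * n by ring, Real.sqrt_mul (by positivity),
            Real.sqrt_sq (by positivity)]
        rw [h1, ← h2]
        exact Real.sqrt_le_sqrt hc
      have hQe' : (Q:ℝ)^2 * Real.exp 1 ≤ 4 * (n:ℝ)^2 := by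
        have hsqe : (0:ℝ) < Real.sqrt (Real.exp 1) := Real.sqrt_pos.mpr he0
        have h4 : (Q:ℝ) * Real.sqrt (Real.exp 1) ≤ 2 * n := by
          have hmul := mul_le_mul_of_nonneg_right hQle hsqe.le
          have hid : 2 / Real.sqrt (Real.exp 1) * (n:ℝ) * Real.sqrt (Real.exp 1)
              = 2 * n := by
            field_simp
          linarith [hmul, hid.le, hid.ge]
        have h5 := mul_le_mul h4 h4 (by positivity) (by positivity)
        have h6 : ((Q:ℝ) * Real.sqrt (Real.exp 1)) * ((Q:ℝ) * Real.sqrt (Real.exp 1))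
            = (Q:ℝ)^2 * Real.exp 1 := by
          linear_combination ((Q:ℝ)^2) * Real.mul_self_sqrt he0.le
        rw [h6] at h5
        nlinarith [h5]
      set S : ℝ := (n:ℝ) * Real.sqrt n with hSdef
      clear_value S
      have hSpos : (0:ℝ) < S := by rw [hSdef]; positivity
      have hSm : S ≤ (m:ℝ) := by
        rw [hSdef, hmR]
        linarith [mul_le_mul_of_nonneg_left hsn hnpos.le]
      set t : ℝ := 5 / S with htdef
      clear_value t
      have ht0 : (0:ℝ) < t := by rw [htdef]; positivity
      have f1 : (Q:ℝ)^4 * Real.exp 1 ≤ 4*(m:ℝ)*(Q:ℝ)^2 := by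
        rw [hmR]
        nlinarith [mul_le_mul_of_nonneg_left hQe' hQpos.le]
      have KEY : 4*(((K:ℝ)+m)*Real.exp 1)*S ≤ 4*((m:ℝ)*(Q:ℝ)^2)*S + 20*((m:ℝ)*(Q:ℝ)^2) := by
        nlinarith [mul_le_mul_of_nonneg_right hKR (mul_pos he0 hSpos).le,
          mul_le_mul_of_nonneg_right f1 hSpos.le,
          mul_le_mul_of_nonneg_left hSm (by positivity : (0:ℝ) ≤ 3*(Q:ℝ)^2*Real.exp 1),
          mul_le_mul_of_nonneg_left hsq (by positivity : (0:ℝ) ≤ 4*(m:ℝ)*Real.exp 1),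
          mul_lt_mul_of_pos_right heU (by positivity : (0:ℝ) < 7*(m:ℝ)*(Q:ℝ)^2), he0.le, hmpos.le]
      have hyt : y ≤ 1 + t := by
        rw [hydef, div_le_iff₀ (by positivity)]
        rw [← sub_nonneg]
        have expand : (1+t)*((m:ℝ)*(Q:ℝ)^2) - ((K:ℝ)+m)*Real.exp 1
            = (4*((m:ℝ)*(Q:ℝ)^2)*S + 20*((m:ℝ)*(Q:ℝ)^2) - 4*(((K:ℝ)+m)*Real.exp 1)*S)
              / (4*S) := by
          rw [htdef]
          field_simp
          ring
        rw [expand]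
        apply div_nonneg (by linarith) (by positivity)
      have hy1 : y^m ≤ (1+t)^m := pow_le_pow_left₀ hy0 hyt m
      have hexp1 : (1+t) ≤ Real.exp t := by
        have := Real.add_one_le_exp t
        linarith
      have hy2 : (1+t)^m ≤ Real.exp t ^ m := pow_le_pow_left₀ (by positivity) hexp1 m
      have hy3 : Real.exp t ^ m = Real.exp ((m:ℝ) * t) := (Real.exp_nat_mul t m).symm
      have hmt : (m:ℝ) * t = 5 * Real.sqrt n := by
        rw [htdef, hSdef, hmR]
        field_simp
        have hsq2 : Real.sqrt n ^ 2 = (n:ℝ) := Real.sq_sqrt (by positivity)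
        linear_combination (-1:ℝ) * hsq2
      have hy4 : Real.exp ((m:ℝ)*t) ≤ Real.exp ((n:ℝ)/2) := by
        apply Real.exp_le_exp.mpr
        rw [hmt]
        linarith [hsn2]
      have hy5 : Real.exp ((n:ℝ)/2) = Real.exp (1/2:ℝ) ^ n := by
        rw [← Real.exp_nat_mul]
        ring_nf
      have hfin2 : 4 * Real.exp (1/2:ℝ) ^ n < ε * (4:ℝ)^n := by
        have h0 : (0:ℝ) < (4:ℝ)^n := by positivity
        have hrw : (4:ℝ) * (Real.exp (1/2) / 4) ^ n * (4:ℝ)^n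
            = 4 * Real.exp (1/2:ℝ) ^ n := by
          rw [div_pow]
          field_simp
        have := mul_lt_mul_of_pos_right hn2 h0
        rw [hrw] at this
        exact this
      have h4n : (4:ℝ)^n ≤ ((Q:ℝ)^2)^n := pow_le_pow_left₀ (by norm_num) hQsq n
      calc 4 * y ^ m ≤ 4 * Real.exp (1/2:ℝ) ^ n := by
            have c1 : y^m ≤ Real.exp (1/2:ℝ) ^ n := by
              calc y^m ≤ (1+t)^m := hy1
                _ ≤ Real.exp t ^ m := hy2
                _ = Real.exp ((m:ℝ) * t) := hy3
                _ ≤ Real.exp ((n:ℝ)/2) := hy4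
                _ = Real.exp (1/2:ℝ) ^ n := hy5
            linarith
        _ < ε * (4:ℝ)^n := hfin2
        _ ≤ ε * ((Q:ℝ)^2) ^ n := by
            linarith [mul_le_mul_of_nonneg_left h4n hε.le]
  -- combine
  have hfin : (4:ℝ) * (((K + m - 1).choose m : ℕ) : ℝ) ≤ 4 * (y ^ m * ((Q:ℝ)^2) ^ m) := by
    linarith
  have hpow : (0:ℝ) < ((Q:ℝ)^2) ^ m := by positivity
  have hstep : 4 * (y ^ m * ((Q:ℝ)^2) ^ m) < ε * ((Q:ℝ)^2) ^ n * ((Q:ℝ)^2) ^ m := by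
    have := mul_lt_mul_of_pos_right main hpow
    calc 4 * (y ^ m * ((Q:ℝ)^2) ^ m) = 4 * y ^ m * ((Q:ℝ)^2) ^ m := by ring
      _ < ε * ((Q:ℝ)^2) ^ n * ((Q:ℝ)^2) ^ m := this
  have hexp : ε * ((Q:ℝ)^2) ^ n * ((Q:ℝ)^2) ^ m = ε * (Q:ℝ) ^ (m * 2 + n * 2) := by
    rw [← pow_mul, ← pow_mul, mul_assoc, ← pow_add]
    congr 2
    omega
  calc (4 : ℝ) * (((K + m - 1).choose m : ℕ) : ℝ)
      ≤ 4 * (y ^ m * ((Q:ℝ)^2) ^ m) := hfin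
    _ < ε * ((Q:ℝ)^2) ^ n * ((Q:ℝ)^2) ^ m := hstep
    _ = ε * (Q:ℝ) ^ (m * 2 + n * 2) := hexp

end S0

/-- For every sequence `q = q(n)` of integers with
`2 ≤ q ≤ (2/√e)·n` (and any choice of complementation involutions), the probability
that a random `n × n` puzzle with `q` jig types has at least two non-similar solutions
tends to `1` as `n → ∞`. -/
theorem statement_0 (q : ℕ → ℕ) (ι : ∀ n, Fin (q n) → Fin (q n))
    (hι : ∀ n, ι n ∘ ι n = id)
    (hq : ∀ᶠ n in atTop, 2 ≤ q n ∧ (q n : ℝ) ≤ 2 / Real.sqrt (Real.exp 1) * n) :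
    Tendsto (fun n =>
        puzzleProb (ι n) fun ω : Carving n (q n) =>
          ∃ A B : Assembly n,
            A.Feasible (ι n) ω ∧ B.Feasible (ι n) ω ∧ ¬ PuzzleSimilar A B ω)
      atTop (nhds 1) := by
  rw [Metric.tendsto_atTop]
  intro ε hε
  have hall := (S0.analytic hε).and (hq.and (eventually_ge_atTop 1))
  rw [Filter.eventually_atTop] at hall
  obtain ⟨N, hN⟩ := hall
  refine ⟨N, fun n hn => ?_⟩
  obtain ⟨hana, ⟨hq2, hqle⟩, hn1⟩ := hN n hn
  classical
  have hbad : ((Finset.univ.filter fun ω : Carving n (q n) =>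
      IsValidCarving (ι n) ω ∧ ¬ ∃ A B : Assembly n,
        A.Feasible (ι n) ω ∧ B.Feasible (ι n) ω ∧ ¬ PuzzleSimilar A B ω)).card ≤
      4 * (((S0.orbs (q n)).card + n * n - 1).choose (n * n)) :=
    S0.bad_card_le n (q n) (ι n)
  have hV : (q n) ^ (n * n * 2 + n * 2) ≤
      ((Finset.univ.filter fun ω : Carving n (q n) => IsValidCarving (ι n) ω)).card :=
    S0.valid_card_ge (by omega) (ι n) (hι n)
  have hana' := hana (q n) ((S0.orbs (q n)).card) hq2 hqle S0.four_mul_card_orbs_le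
  simp only [puzzleProb]
  set AC := ((Finset.univ.filter fun ω : Carving n (q n) =>
      IsValidCarving (ι n) ω ∧ ∃ A B : Assembly n,
        A.Feasible (ι n) ω ∧ B.Feasible (ι n) ω ∧ ¬ PuzzleSimilar A B ω)).card with hACdef
  set BC := ((Finset.univ.filter fun ω : Carving n (q n) =>
      IsValidCarving (ι n) ω ∧ ¬ ∃ A B : Assembly n,
        A.Feasible (ι n) ω ∧ B.Feasible (ι n) ω ∧ ¬ PuzzleSimilar A B ω)).card with hBCdef
  set VC := ((Finset.univ.filter fun ω : Carving n (q n) =>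
      IsValidCarving (ι n) ω)).card with hVCdef
  have hsum : AC + BC = VC := by
    rw [hACdef, hBCdef, hVCdef, ← Finset.filter_filter, ← Finset.filter_filter]
    exact Finset.card_filter_add_card_filter_not (p := fun ω =>
      ∃ A B : Assembly n, A.Feasible (ι n) ω ∧ B.Feasible (ι n) ω ∧ ¬ PuzzleSimilar A B ω)
  have hVpos : 0 < VC := lt_of_lt_of_le (pow_pos (by omega : 0 < q n) _) hV
  have hVR : (0:ℝ) < (VC:ℝ) := by exact_mod_cast hVpos
  have hBC_lt : (BC:ℝ) < ε * VC := by
    have h1 : (BC:ℝ) ≤ 4 * ((((S0.orbs (q n)).card + n * n - 1).choose (n * n) : ℕ) : ℝ) := by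
      exact_mod_cast hbad
    have h2 : ε * ((q n : ℝ)) ^ (n * n * 2 + n * 2) ≤ ε * VC := by
      apply mul_le_mul_of_nonneg_left _ hε.le
      calc ((q n : ℝ)) ^ (n * n * 2 + n * 2) = (((q n) ^ (n * n * 2 + n * 2) : ℕ) : ℝ) := by
            push_cast; ring
        _ ≤ (VC : ℝ) := by exact_mod_cast hV
    linarith
  have hACR : (AC:ℝ) = (VC:ℝ) - BC := by
    have : (AC:ℝ) + BC = VC := by exact_mod_cast hsum
    linarith
  have hprob_eq : (AC:ℝ)/VC = 1 - (BC:ℝ)/VC := by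
    rw [hACR]
    field_simp
  have hprob_le : (AC:ℝ)/VC ≤ 1 := by
    rw [div_le_one hVR]
    have : AC ≤ VC := by omega
    exact_mod_cast this
  have hprob_gt : 1 - ε < (AC:ℝ)/VC := by
    rw [hprob_eq]
    have : (BC:ℝ)/VC < ε := (div_lt_iff₀ hVR).mpr (by linarith)
    linarith
  rw [Real.dist_eq, abs_lt]
  constructor
  · linarith
  · linarith
end

section
/- For every sequence q = q(n) of integers with q(n)/n → ∞, the probability that a random n×n puzzle with q jig types contains either two distinct pieces whose carvings are identical up to rotation, or a piece whose carving is invariant under 180° rotation, tends to 0 as n → ∞. -/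
open Finset Filter

noncomputable section Helpers
open scoped Classical

lemma cellZ_injective {n : ℕ} : Function.Injective (cellZ (n := n)) := by
  rintro ⟨a, b⟩ ⟨c, d⟩ h
  simp only [cellZ, Prod.mk.injEq, Int.natCast_inj] at h
  exact Prod.ext (Fin.ext (by exact_mod_cast h.1)) (Fin.ext (by exact_mod_cast h.2))

lemma dirVec_ne_zero (d : ZMod 4) : dirVec d ≠ 0 := by revert d; decide

lemma dirVec_add_two (d : ZMod 4) : dirVec (d + 2) = -dirVec d := by revert d; decide

lemma dirVec_injective : Function.Injective dirVec := by decide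

lemma two_add_two : (2 : ZMod 4) + 2 = 0 := by decide

lemma coinc_unique {n : ℕ} {a x y : Cell n × ZMod 4}
    (hx : CoincidentPlanted a x) (hy : CoincidentPlanted a y) : x = y := by
  obtain ⟨hx1, hx2⟩ := hx; obtain ⟨hy1, hy2⟩ := hy
  exact Prod.ext (cellZ_injective (hx1.trans hy1.symm)) (hx2.trans hy2.symm)

lemma coinc_symm {n : ℕ} {a b : Cell n × ZMod 4}
    (h : CoincidentPlanted a b) : CoincidentPlanted b a := by
  obtain ⟨h1, h2⟩ := h
  constructor
  · rw [h2, dirVec_add_two, h1]; ring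
  · rw [h2]; rw [add_assoc, two_add_two, add_zero]

lemma coinc_self_ne {n : ℕ} {p : Cell n} {a b : ZMod 4}
    (h : CoincidentPlanted (p, a) (p, b)) : False := by
  have := h.1
  simp only [left_eq_add] at this
  exact dirVec_ne_zero a this
variable {n q : ℕ}

/-- Resample the sides in `S` (and their coincident partners) of a carving. -/
def resample (ι : Fin q → Fin q) (S : Finset (Cell n × ZMod 4)) (g : ↥S → Fin q)
    (ω : Carving n q) : Carving n q :=
  fun p d =>
    if h : (p, d) ∈ S then g ⟨(p, d), h⟩
    else if h2 : ∃ x : ↥S, CoincidentPlanted (p, d) (x : Cell n × ZMod 4) then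
      ι (g h2.choose)
    else ω p d

lemma resample_mem (ι : Fin q → Fin q) (S : Finset (Cell n × ZMod 4)) (g : ↥S → Fin q)
    (ω : Carving n q) {p : Cell n} {d : ZMod 4} (h : (p, d) ∈ S) :
    resample ι S g ω p d = g ⟨(p, d), h⟩ := by
  simp [resample, h]

lemma resample_coinc (ι : Fin q → Fin q) (S : Finset (Cell n × ZMod 4)) (g : ↥S → Fin q)
    (ω : Carving n q) {p : Cell n} {d : ZMod 4} (h : (p, d) ∉ S) (x : ↥S)
    (hx : CoincidentPlanted (p, d) (x : Cell n × ZMod 4)) :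
    resample ι S g ω p d = ι (g x) := by
  have h2 : ∃ x : ↥S, CoincidentPlanted (p, d) (x : Cell n × ZMod 4) := ⟨x, hx⟩
  have hux : h2.choose = x :=
    Subtype.ext (coinc_unique h2.choose_spec hx)
  simp only [resample, dif_neg h, dif_pos h2, hux]

lemma resample_untouched (ι : Fin q → Fin q) (S : Finset (Cell n × ZMod 4)) (g : ↥S → Fin q)
    (ω : Carving n q) {p : Cell n} {d : ZMod 4} (h : (p, d) ∉ S)
    (h2 : ∀ x ∈ S, ¬ CoincidentPlanted (p, d) x) :
    resample ι S g ω p d = ω p d := by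
  have h2' : ¬ ∃ x : ↥S, CoincidentPlanted (p, d) (x : Cell n × ZMod 4) := by
    rintro ⟨x, hx⟩; exact h2 x x.2 hx
  simp only [resample, dif_neg h, dif_neg h2']

lemma resample_valid (ι : Fin q → Fin q) (hι : ∀ j, ι (ι j) = j)
    (S : Finset (Cell n × ZMod 4))
    (hS : ∀ x ∈ S, ∀ y ∈ S, ¬ CoincidentPlanted x y) (g : ↥S → Fin q)
    (ω : Carving n q) (hω : IsValidCarving ι ω) :
    IsValidCarving ι (resample ι S g ω) := by
  intro p p' d hadj
  have hab : CoincidentPlanted (p, d) (p', d + 2) := ⟨hadj, rfl⟩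
  by_cases h1 : (p, d) ∈ S
  · have hb : (p', d + 2) ∉ S := fun hb => hS _ h1 _ hb hab
    rw [resample_mem ι S g ω h1,
      resample_coinc ι S g ω hb ⟨(p, d), h1⟩ (coinc_symm hab)]
  · by_cases h2 : (p', d + 2) ∈ S
    · rw [resample_mem ι S g ω h2, resample_coinc ι S g ω h1 ⟨(p', d + 2), h2⟩ hab]
      exact (hι _).symm
    · have hu1 : ∀ x ∈ S, ¬ CoincidentPlanted (p, d) x := by
        intro x hx hcx
        exact h2 (coinc_unique hab hcx ▸ hx)
      have hu2 : ∀ x ∈ S, ¬ CoincidentPlanted (p', d + 2) x := by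
        intro x hx hcx
        exact h1 (coinc_unique (coinc_symm hab) hcx ▸ hx)
      rw [resample_untouched ι S g ω h1 hu1, resample_untouched ι S g ω h2 hu2]
      exact hω p p' d hadj

/-- Master counting lemma: if agreement off `S` forces agreement on `S` for carvings
in the event `E`, then the event has probability at most `q ^ |S|`. -/
lemma master_count (ι : Fin q → Fin q) (hι : ∀ j, ι (ι j) = j)
    (E : Carving n q → Prop) (S : Finset (Cell n × ZMod 4))
    (hS : ∀ x ∈ S, ∀ y ∈ S, ¬ CoincidentPlanted x y)
    (hE : ∀ ω₁ ω₂ : Carving n q, IsValidCarving ι ω₁ → IsValidCarving ι ω₂ →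
      E ω₁ → E ω₂ →
      (∀ p d, (p, d) ∉ S → (∀ x ∈ S, ¬ CoincidentPlanted (p, d) x) → ω₁ p d = ω₂ p d) →
      ∀ x ∈ S, ω₁ x.1 x.2 = ω₂ x.1 x.2) :
    (Finset.univ.filter fun ω : Carving n q => IsValidCarving ι ω ∧ E ω).card * q ^ S.card
      ≤ (Finset.univ.filter fun ω : Carving n q => IsValidCarving ι ω).card := by
  have key := Finset.card_le_card_of_injOn
    (f := fun x : Carving n q × (↥S → Fin q) => resample ι S x.2 x.1)
    (s := (Finset.univ.filter fun ω : Carving n q => IsValidCarving ι ω ∧ E ω) ×ˢ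
      (Finset.univ : Finset (↥S → Fin q)))
    (t := Finset.univ.filter fun ω : Carving n q => IsValidCarving ι ω)
    ?_ ?_
  · calc (Finset.univ.filter fun ω : Carving n q => IsValidCarving ι ω ∧ E ω).card * q ^ S.card
        = ((Finset.univ.filter fun ω : Carving n q => IsValidCarving ι ω ∧ E ω) ×ˢ
          (Finset.univ : Finset (↥S → Fin q))).card := by
          rw [Finset.card_product, Finset.card_univ, Fintype.card_fun]
          simp [Fintype.card_coe]
      _ ≤ _ := key
  · rintro ⟨ω, g⟩ hmem
    simp only [Finset.mem_product, Finset.mem_filter, Finset.mem_coe] at hmem ⊢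
    exact ⟨Finset.mem_univ _, resample_valid ι hι S hS g ω hmem.1.2.1⟩
  · rintro ⟨ω₁, g₁⟩ hm1 ⟨ω₂, g₂⟩ hm2 heq
    simp only [Finset.mem_coe, Finset.mem_product, Finset.mem_filter] at hm1 hm2
    obtain ⟨⟨-, hv1, hE1⟩, -⟩ := hm1
    obtain ⟨⟨-, hv2, hE2⟩, -⟩ := hm2
    have hg : g₁ = g₂ := by
      funext x
      have h1 := resample_mem ι S g₁ ω₁ (p := (x : Cell n × ZMod 4).1)
        (d := (x : Cell n × ZMod 4).2) (by simpa using x.2)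
      have h2 := resample_mem ι S g₂ ω₂ (p := (x : Cell n × ZMod 4).1)
        (d := (x : Cell n × ZMod 4).2) (by simpa using x.2)
      have := congrFun (congrFun heq (x : Cell n × ZMod 4).1) (x : Cell n × ZMod 4).2
      dsimp only at this
      rw [h1, h2] at this
      simpa using this
    have hunt : ∀ p d, (p, d) ∉ S → (∀ x ∈ S, ¬ CoincidentPlanted (p, d) x) →
        ω₁ p d = ω₂ p d := by
      intro p d h h2
      have := congrFun (congrFun heq p) d
      dsimp only at this
      rwa [resample_untouched ι S g₁ ω₁ h h2, resample_untouched ι S g₂ ω₂ h h2] at this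
    have hSag := hE ω₁ ω₂ hv1 hv2 hE1 hE2 hunt
    have hω : ω₁ = ω₂ := by
      funext p d
      by_cases h1 : (p, d) ∈ S
      · exact hSag (p, d) h1
      · by_cases h2 : ∃ x ∈ S, CoincidentPlanted (p, d) x
        · obtain ⟨x, hxS, hx⟩ := h2
          have e1 : ω₁ x.1 x.2 = ι (ω₁ p d) := by
            have := hv1 p x.1 d hx.1
            rw [← hx.2] at this
            simpa using this
          have e2 : ω₂ x.1 x.2 = ι (ω₂ p d) := by
            have := hv2 p x.1 d hx.1
            rw [← hx.2] at this
            simpa using this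
          have := hSag x hxS
          rw [e1, e2] at this
          calc ω₁ p d = ι (ι (ω₁ p d)) := (hι _).symm
            _ = ι (ι (ω₂ p d)) := by rw [this]
            _ = ω₂ p d := hι _
        · push_neg at h2
          exact hunt p d h1 h2
    rw [hg, hω]
/-- The sides of `p'` not coincident (in the planted puzzle) with any side of `p`. -/
def Spair {n : ℕ} (p p' : Cell n) : Finset (Cell n × ZMod 4) :=
  Finset.univ.filter fun x => x.1 = p' ∧ ¬ ∃ d, CoincidentPlanted (p, d) x

lemma Spair_noCoinc {n : ℕ} (p p' : Cell n) :
    ∀ x ∈ Spair p p', ∀ y ∈ Spair p p', ¬ CoincidentPlanted x y := by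
  intro x hx y hy hc
  simp only [Spair, Finset.mem_filter] at hx hy
  obtain ⟨h1, h2⟩ := hc
  rw [hx.2.1] at h1
  rw [hy.2.1] at h1
  exact coinc_self_ne (p := p') (a := x.2) (b := y.2) ⟨h1, h2⟩

lemma Spair_card {n : ℕ} (p p' : Cell n) :
    3 ≤ (Spair p p').card ∧
      ((¬ ∃ d, cellZ p' = cellZ p + dirVec d) → (Spair p p').card = 4) := by
  have himg : Spair p p' = Finset.image (fun d : ZMod 4 => (p', d))
      (Finset.univ.filter fun d' => ¬ ∃ d, CoincidentPlanted (p, d) (p', d')) := by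
    ext ⟨c, d'⟩
    simp only [Spair, Finset.mem_filter, Finset.mem_univ, true_and, Finset.mem_image,
      Prod.mk.injEq]
    constructor
    · rintro ⟨rfl, h⟩; exact ⟨d', ⟨h, rfl, rfl⟩⟩
    · rintro ⟨e, he, rfl, rfl⟩; exact ⟨rfl, he⟩
  have hinj : Function.Injective (fun d : ZMod 4 => (p', d)) := by
    intro a b h; simpa using h
  rw [himg, Finset.card_image_of_injective _ hinj]
  set N := Finset.univ.filter fun d' : ZMod 4 => ∃ d, CoincidentPlanted (p, d) (p', d')
    with hN
  have hDeq : (Finset.univ.filter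
      fun d' : ZMod 4 => ¬ ∃ d, CoincidentPlanted (p, d) (p', d')) = Finset.univ \ N := by
    rw [hN, Finset.filter_not]
  have hu4 : (Finset.univ : Finset (ZMod 4)).card = 4 := by decide
  have hDcard : (Finset.univ.filter
      fun d' : ZMod 4 => ¬ ∃ d, CoincidentPlanted (p, d) (p', d')).card = 4 - N.card := by
    rw [hDeq, Finset.card_sdiff_of_subset (Finset.subset_univ _), hu4]
  have hN1 : N.card ≤ 1 := by
    apply Finset.card_le_one.mpr
    intro a ha b hb
    simp only [hN, Finset.mem_filter] at ha hb
    obtain ⟨-, da, hda⟩ := ha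
    obtain ⟨-, db, hdb⟩ := hb
    have ha1 : cellZ p' = cellZ p + dirVec da := hda.1
    have ha2 : a = da + 2 := hda.2
    have hb1 : cellZ p' = cellZ p + dirVec db := hdb.1
    have hb2 : b = db + 2 := hdb.2
    have : da = db := dirVec_injective (add_left_cancel (ha1.symm.trans hb1))
    rw [ha2, hb2, this]
  constructor
  · omega
  · intro hna
    have hN0 : N.card = 0 := by
      rw [hN, Finset.card_eq_zero, Finset.filter_eq_empty_iff]
      rintro d' - ⟨d, hd1, -⟩
      exact hna ⟨d, hd1⟩
    omega

set_option maxHeartbeats 1000000 in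
/-- Probability bound for the event that pieces `p` and `p'` have the same carving up
to rotation by `r`. -/
lemma pair_count {n q : ℕ} (ι : Fin q → Fin q) (hι : ∀ j, ι (ι j) = j)
    (p p' : Cell n) (r : ZMod 4) :
    (Finset.univ.filter fun ω : Carving n q => IsValidCarving ι ω ∧
        (p ≠ p' ∧ ∀ s, ω p' s = ω p (s + r))).card * q ^ (Spair p p').card
      ≤ (Finset.univ.filter fun ω : Carving n q => IsValidCarving ι ω).card := by
  have hE : ∀ ω₁ ω₂ : Carving n q, IsValidCarving ι ω₁ → IsValidCarving ι ω₂ →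
      (p ≠ p' ∧ ∀ s, ω₁ p' s = ω₁ p (s + r)) → (p ≠ p' ∧ ∀ s, ω₂ p' s = ω₂ p (s + r)) →
      (∀ pc d, (pc, d) ∉ Spair p p' → (∀ x ∈ Spair p p', ¬ CoincidentPlanted (pc, d) x) →
        ω₁ pc d = ω₂ pc d) →
      ∀ x ∈ Spair p p', ω₁ x.1 x.2 = ω₂ x.1 x.2 := by
    rintro ω₁ ω₂ hv1 hv2 ⟨hne, h1⟩ ⟨-, h2⟩ hunt x hx
    simp only [Spair, Finset.mem_filter] at hx
    obtain ⟨-, hx1, hx2⟩ := hx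
    have hsides : ω₁ p (x.2 + r) = ω₂ p (x.2 + r) := by
      apply hunt
      · intro hmem
        simp only [Spair, Finset.mem_filter] at hmem
        exact hne (hmem.2.1 ▸ rfl)
      · intro y hy hcy
        simp only [Spair, Finset.mem_filter] at hy
        exact hy.2.2 ⟨x.2 + r, hcy⟩
    rw [hx1, h1 x.2, h2 x.2, hsides]
  have key := master_count ι hι (fun ω => p ≠ p' ∧ ∀ s, ω p' s = ω p (s + r))
    (Spair p p') (Spair_noCoinc p p') hE
  convert key using 3
  exact (Finset.filter_congr_decidable _ _ _).trans (Finset.filter_congr_decidable _ _ _).symm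

set_option maxHeartbeats 1000000 in
/-- Probability bound for the event that piece `p` has a 180°-symmetric carving. -/
lemma self_count {n q : ℕ} (ι : Fin q → Fin q) (hι : ∀ j, ι (ι j) = j) (p : Cell n) :
    (Finset.univ.filter fun ω : Carving n q => IsValidCarving ι ω ∧
        (∀ s, ω p (s + 2) = ω p s)).card * q ^ 2
      ≤ (Finset.univ.filter fun ω : Carving n q => IsValidCarving ι ω).card := by
  set S : Finset (Cell n × ZMod 4) := {(p, (2 : ZMod 4)), (p, (3 : ZMod 4))} with hSdef
  have hScard : S.card = 2 := by
    rw [hSdef, Finset.card_insert_of_notMem (by simp; decide), Finset.card_singleton]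
  have hmem1 : ∀ y ∈ S, y.1 = p := by
    intro y hy
    rw [hSdef] at hy
    simp only [Finset.mem_insert, Finset.mem_singleton] at hy
    rcases hy with rfl | rfl <;> rfl
  have hS : ∀ x ∈ S, ∀ y ∈ S, ¬ CoincidentPlanted x y := by
    intro x hx y hy hc
    obtain ⟨h1, h2⟩ := hc
    rw [hmem1 x hx] at h1; rw [hmem1 y hy] at h1
    exact coinc_self_ne (p := p) (a := x.2) (b := y.2) ⟨h1, h2⟩
  have hE : ∀ ω₁ ω₂ : Carving n q, IsValidCarving ι ω₁ → IsValidCarving ι ω₂ →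
      (∀ s, ω₁ p (s + 2) = ω₁ p s) → (∀ s, ω₂ p (s + 2) = ω₂ p s) →
      (∀ pc d, (pc, d) ∉ S → (∀ x ∈ S, ¬ CoincidentPlanted (pc, d) x) →
        ω₁ pc d = ω₂ pc d) →
      ∀ x ∈ S, ω₁ x.1 x.2 = ω₂ x.1 x.2 := by
    intro ω₁ ω₂ hv1 hv2 h1 h2 hunt x hx
    have huntouched : ∀ e : ZMod 4, (p, e) ∉ S → ω₁ p e = ω₂ p e := by
      intro e he
      apply hunt _ _ he
      intro y hy hcy
      obtain ⟨hc1, hc2⟩ := hcy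
      rw [hmem1 y hy] at hc1
      exact coinc_self_ne (p := p) (a := e) (b := y.2) ⟨hc1, hc2⟩
    rw [hSdef] at hx
    simp only [Finset.mem_insert, Finset.mem_singleton] at hx
    have h02 : (0 : ZMod 4) + 2 = 2 := by decide
    have h12 : (1 : ZMod 4) + 2 = 3 := by decide
    rcases hx with rfl | rfl
    · have e1 := h1 0
      have e2 := h2 0
      rw [h02] at e1 e2
      rw [e1, e2]
      exact huntouched 0 (by rw [hSdef]; simp; decide)
    · have e1 := h1 1
      have e2 := h2 1
      rw [h12] at e1 e2
      rw [e1, e2]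
      exact huntouched 1 (by rw [hSdef]; simp; decide)
  have key := master_count ι hι (fun ω => ∀ s, ω p (s + 2) = ω p s) S hS hE
  rw [hScard] at key
  convert key using 3
  exact (Finset.filter_congr_decidable _ _ _).trans (Finset.filter_congr_decidable _ _ _).symm
lemma exists_valid (ι : Fin q → Fin q) (hι : ∀ j, ι (ι j) = j) (hq : 0 < q) :
    ∃ ω : Carving n q, IsValidCarving ι ω := by
  refine ⟨fun p d => if d = 0 ∨ d = 1 then ⟨0, hq⟩ else ι ⟨0, hq⟩, ?_⟩
  intro p p' d _
  have hd : ∀ e : ZMod 4, e = 0 ∨ e = 1 ∨ e = 2 ∨ e = 3 := by decide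
  rcases hd d with rfl | rfl | rfl | rfl <;>
    simp +decide [hι]

/-- A canonical direction witnessing adjacency. -/
def dAdj (p p' : Cell n) : ZMod 4 :=
  if h : ∃ d, cellZ p' = cellZ p + dirVec d then h.choose else 0

lemma adj_card (n : ℕ) :
    ((Finset.univ : Finset (Cell n × Cell n × ZMod 4)).filter
      (fun x => ∃ d, cellZ x.2.1 = cellZ x.1 + dirVec d)).card ≤ n * n * 16 := by
  have key := Finset.card_le_card_of_injOn
    (f := fun x : Cell n × Cell n × ZMod 4 => (x.1, dAdj x.1 x.2.1, x.2.2))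
    (s := (Finset.univ : Finset (Cell n × Cell n × ZMod 4)).filter
      (fun x => ∃ d, cellZ x.2.1 = cellZ x.1 + dirVec d))
    (t := (Finset.univ : Finset (Cell n × ZMod 4 × ZMod 4)))
    (fun _ _ => Finset.mem_univ _) ?_
  · calc _ ≤ (Finset.univ : Finset (Cell n × ZMod 4 × ZMod 4)).card := key
      _ = n * n * 16 := by
        rw [Finset.card_univ]
        simp only [Fintype.card_prod, Fintype.card_fin, ZMod.card]
        try ring
  · intro x hx y hy hxy
    simp only [Finset.coe_filter, Set.mem_setOf_eq] at hx hy
    obtain ⟨-, hx2⟩ := hx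
    obtain ⟨-, hy2⟩ := hy
    have hx3 : cellZ x.2.1 = cellZ x.1 + dirVec (dAdj x.1 x.2.1) := by
      unfold dAdj; rw [dif_pos hx2]; exact hx2.choose_spec
    have hy3 : cellZ y.2.1 = cellZ y.1 + dirVec (dAdj y.1 y.2.1) := by
      unfold dAdj; rw [dif_pos hy2]; exact hy2.choose_spec
    simp only [Prod.mk.injEq] at hxy
    obtain ⟨e1, e2, e3⟩ := hxy
    have : cellZ x.2.1 = cellZ y.2.1 := by rw [hx3, hy3, e2, e1]
    exact Prod.ext e1 (Prod.ext (cellZ_injective this) e3)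

set_option maxHeartbeats 4000000 in
lemma main_bound {n Q : ℕ} (ι : Fin Q → Fin Q) (hι : ∀ j, ι (ι j) = j)
    (hn : 1 ≤ n) (hQ : n ≤ Q) :
    puzzleProb ι (fun ω : Carving n Q =>
        (∃ p p' : Cell n, p ≠ p' ∧ ∃ r : ZMod 4, ∀ s, ω p' s = ω p (s + r)) ∨
        (∃ p : Cell n, ∀ s, ω p (s + 2) = ω p s)) ≤ 21 * ((n : ℝ) / Q) ^ 2 := by
  have hQ1 : 0 < Q := lt_of_lt_of_le hn hQ
  have hQR : (0 : ℝ) < Q := by exact_mod_cast hQ1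
  set V := (Finset.univ.filter fun ω : Carving n Q => IsValidCarving ι ω).card with hV
  have hV1 : 1 ≤ V := by
    obtain ⟨ω, hω⟩ := exists_valid ι hι hQ1
    exact Finset.card_pos.mpr ⟨ω, Finset.mem_filter.mpr ⟨Finset.mem_univ _, hω⟩⟩
  have hVR : (0 : ℝ) < V := by exact_mod_cast hV1
  set A := Finset.univ.filter fun ω : Carving n Q =>
    IsValidCarving ι ω ∧
      ((∃ p p' : Cell n, p ≠ p' ∧ ∃ r : ZMod 4, ∀ s, ω p' s = ω p (s + r)) ∨
        (∃ p : Cell n, ∀ s, ω p (s + 2) = ω p s)) with hA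
  set c1 : Cell n × Cell n × ZMod 4 → ℕ := fun x =>
    (Finset.univ.filter fun ω : Carving n Q => IsValidCarving ι ω ∧
      (x.1 ≠ x.2.1 ∧ ∀ s, ω x.2.1 s = ω x.1 (s + x.2.2))).card with hc1def
  set c2 : Cell n → ℕ := fun p =>
    (Finset.univ.filter fun ω : Carving n Q => IsValidCarving ι ω ∧
      (∀ s, ω p (s + 2) = ω p s)).card with hc2def
  -- union bound in ℕ
  have hunion : A.card ≤ (∑ x : Cell n × Cell n × ZMod 4, c1 x) + ∑ p : Cell n, c2 p := by
    have hsub : A ⊆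
        ((Finset.univ : Finset (Cell n × Cell n × ZMod 4)).biUnion fun x =>
          Finset.univ.filter fun ω : Carving n Q => IsValidCarving ι ω ∧
            (x.1 ≠ x.2.1 ∧ ∀ s, ω x.2.1 s = ω x.1 (s + x.2.2))) ∪
        ((Finset.univ : Finset (Cell n)).biUnion fun p =>
          Finset.univ.filter fun ω : Carving n Q => IsValidCarving ι ω ∧
            (∀ s, ω p (s + 2) = ω p s)) := by
      intro ω hω
      rw [hA, Finset.mem_filter] at hω
      obtain ⟨-, hv, hP⟩ := hω
      rcases hP with ⟨p, p', hne, r, h⟩ | ⟨p, h⟩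
      · exact Finset.mem_union_left _ (Finset.mem_biUnion.mpr ⟨(p, p', r),
          Finset.mem_univ _, Finset.mem_filter.mpr ⟨Finset.mem_univ _, hv, hne, h⟩⟩)
      · exact Finset.mem_union_right _ (Finset.mem_biUnion.mpr ⟨p,
          Finset.mem_univ _, Finset.mem_filter.mpr ⟨Finset.mem_univ _, hv, h⟩⟩)
    calc A.card ≤ _ := Finset.card_le_card hsub
      _ ≤ _ + _ := Finset.card_union_le _ _
      _ ≤ _ := add_le_add (Finset.card_biUnion_le) (Finset.card_biUnion_le)
  -- individual bounds in ℝ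
  have hc2 : ∀ p : Cell n, (c2 p : ℝ) ≤ V / Q ^ 2 := by
    intro p
    rw [le_div_iff₀ (by positivity)]
    exact_mod_cast self_count ι hι p
  have hc1 : ∀ x : Cell n × Cell n × ZMod 4, (c1 x : ℝ) ≤
      if ∃ d, cellZ x.2.1 = cellZ x.1 + dirVec d then (V : ℝ) / Q ^ 3
      else (V : ℝ) / Q ^ 4 := by
    intro ⟨p, p', r⟩
    have hpc := pair_count ι hι p p' r
    obtain ⟨h3, h4⟩ := Spair_card p p'
    split_ifs with hadj
    · rw [le_div_iff₀ (by positivity)]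
      have : c1 (p, p', r) * Q ^ 3 ≤ c1 (p, p', r) * Q ^ (Spair p p').card :=
        Nat.mul_le_mul_left _ (Nat.pow_le_pow_right hQ1 h3)
      exact_mod_cast le_trans this hpc
    · rw [le_div_iff₀ (by positivity)]
      rw [h4 hadj] at hpc
      exact_mod_cast hpc
  -- sum the bounds
  have hsum1 : ∑ x : Cell n × Cell n × ZMod 4, (c1 x : ℝ) ≤
      (n * n * 16 : ℝ) * ((V : ℝ) / Q ^ 3) + (4 * (n : ℝ) ^ 4) * ((V : ℝ) / Q ^ 4) := by
    calc ∑ x : Cell n × Cell n × ZMod 4, (c1 x : ℝ)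
        ≤ ∑ x : Cell n × Cell n × ZMod 4,
          (if ∃ d, cellZ x.2.1 = cellZ x.1 + dirVec d then (V : ℝ) / Q ^ 3
            else (V : ℝ) / Q ^ 4) := Finset.sum_le_sum fun x _ => hc1 x
      _ = ((Finset.univ.filter fun x : Cell n × Cell n × ZMod 4 =>
            ∃ d, cellZ x.2.1 = cellZ x.1 + dirVec d).card : ℝ) * ((V : ℝ) / Q ^ 3) +
          ((Finset.univ.filter fun x : Cell n × Cell n × ZMod 4 =>
            ¬ ∃ d, cellZ x.2.1 = cellZ x.1 + dirVec d).card : ℝ) * ((V : ℝ) / Q ^ 4) := by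
          rw [Finset.sum_ite]
          simp [Finset.sum_const, nsmul_eq_mul]
      _ ≤ (n * n * 16 : ℝ) * ((V : ℝ) / Q ^ 3) + (4 * (n : ℝ) ^ 4) * ((V : ℝ) / Q ^ 4) := by
          apply add_le_add
          · apply mul_le_mul_of_nonneg_right _ (by positivity)
            exact_mod_cast adj_card n
          · apply mul_le_mul_of_nonneg_right _ (by positivity)
            have h1 : (Finset.univ.filter fun x : Cell n × Cell n × ZMod 4 =>
                ¬ ∃ d, cellZ x.2.1 = cellZ x.1 + dirVec d).card
                ≤ Fintype.card (Cell n × Cell n × ZMod 4) := by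
              rw [← Finset.card_univ]
              exact Finset.card_le_card (Finset.filter_subset _ _)
            have h2 : Fintype.card (Cell n × Cell n × ZMod 4) = 4 * n ^ 4 := by
              simp only [Fintype.card_prod, Fintype.card_fin, ZMod.card]
              try ring
            calc ((Finset.univ.filter fun x : Cell n × Cell n × ZMod 4 =>
                ¬ ∃ d, cellZ x.2.1 = cellZ x.1 + dirVec d).card : ℝ)
                ≤ ((4 * n ^ 4 : ℕ) : ℝ) := by exact_mod_cast h2 ▸ h1
              _ = 4 * (n : ℝ) ^ 4 := by push_cast; ring
  have hsum2 : ∑ p : Cell n, (c2 p : ℝ) ≤ (n * n : ℝ) * ((V : ℝ) / Q ^ 2) := by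
    calc ∑ p : Cell n, (c2 p : ℝ) ≤ ∑ _p : Cell n, (V : ℝ) / Q ^ 2 :=
        Finset.sum_le_sum fun p _ => hc2 p
      _ = (n * n : ℝ) * ((V : ℝ) / Q ^ 2) := by
          rw [Finset.sum_const, nsmul_eq_mul, Finset.card_univ]
          have : Fintype.card (Cell n) = n * n := by
            simp only [Fintype.card_prod, Fintype.card_fin]
          rw [this]
          push_cast
          ring
  -- assemble
  have hAV : (A.card : ℝ) ≤
      (16 * (n : ℝ) ^ 2 / Q ^ 3 + 4 * (n : ℝ) ^ 4 / Q ^ 4 + (n : ℝ) ^ 2 / Q ^ 2) * V := by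
    calc (A.card : ℝ) ≤ (∑ x : Cell n × Cell n × ZMod 4, (c1 x : ℝ)) +
          ∑ p : Cell n, (c2 p : ℝ) := by exact_mod_cast hunion
      _ ≤ ((n * n * 16 : ℝ) * ((V : ℝ) / Q ^ 3) + (4 * (n : ℝ) ^ 4) * ((V : ℝ) / Q ^ 4)) +
          (n * n : ℝ) * ((V : ℝ) / Q ^ 2) := add_le_add hsum1 hsum2
      _ = (16 * (n : ℝ) ^ 2 / Q ^ 3 + 4 * (n : ℝ) ^ 4 / Q ^ 4 + (n : ℝ) ^ 2 / Q ^ 2) * V := by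
          ring
  have hprob : puzzleProb ι (fun ω : Carving n Q =>
        (∃ p p' : Cell n, p ≠ p' ∧ ∃ r : ZMod 4, ∀ s, ω p' s = ω p (s + r)) ∨
        (∃ p : Cell n, ∀ s, ω p (s + 2) = ω p s)) ≤
      16 * (n : ℝ) ^ 2 / Q ^ 3 + 4 * (n : ℝ) ^ 4 / Q ^ 4 + (n : ℝ) ^ 2 / Q ^ 2 := by
    have hunf : puzzleProb ι (fun ω : Carving n Q =>
        (∃ p p' : Cell n, p ≠ p' ∧ ∃ r : ZMod 4, ∀ s, ω p' s = ω p (s + r)) ∨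
        (∃ p : Cell n, ∀ s, ω p (s + 2) = ω p s)) = (A.card : ℝ) / V := by
      simp only [puzzleProb]
      rw [hV, hA]
    rw [hunf, div_le_iff₀ hVR]
    exact hAV
  refine le_trans hprob ?_
  -- final numeric estimate
  set x := (n : ℝ) / Q with hx
  have hx0 : 0 ≤ x := by positivity
  have hx1 : x ≤ 1 := by
    rw [hx, div_le_one hQR]
    exact_mod_cast hQ
  have hQ1R : (1 : ℝ) ≤ Q := by exact_mod_cast hQ1
  have e2 : (n : ℝ) ^ 2 / Q ^ 2 = x ^ 2 := by rw [hx, div_pow]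
  have t1 : 16 * (n : ℝ) ^ 2 / Q ^ 3 ≤ 16 * x ^ 2 := by
    have : (n : ℝ) ^ 2 / Q ^ 3 = x ^ 2 / Q := by
      rw [hx, div_pow]
      rw [div_div]
      ring_nf
    rw [mul_div_assoc, this]
    have := div_le_self (by positivity : (0:ℝ) ≤ x ^ 2) hQ1R
    linarith
  have t2 : 4 * (n : ℝ) ^ 4 / Q ^ 4 ≤ 4 * x ^ 2 := by
    have h4 : (n : ℝ) ^ 4 / Q ^ 4 = x ^ 4 := by rw [hx, div_pow]
    rw [mul_div_assoc, h4]
    have := pow_le_pow_of_le_one hx0 hx1 (by norm_num : 2 ≤ 4)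
    linarith
  have t3 : (n : ℝ) ^ 2 / Q ^ 2 = x ^ 2 := e2
  linarith
end Helpers

/-- For every sequence `q = q(n)` of integers with `q(n)/n → ∞`
(and any choice of complementation involutions), the probability that a random `n × n`
puzzle with `q` jig types contains either two distinct pieces whose carvings are
identical up to rotation, or a piece whose carving is invariant under a 180° rotation,
tends to `0` as `n → ∞`. -/
theorem statement_3 (q : ℕ → ℕ) (ι : ∀ n, Fin (q n) → Fin (q n))
    (hι : ∀ n, ι n ∘ ι n = id)
    (hq : Tendsto (fun n => (q n : ℝ) / n) atTop atTop) :
    Tendsto (fun n =>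
        puzzleProb (ι n) fun ω : Carving n (q n) =>
          (∃ p p' : Cell n, p ≠ p' ∧ ∃ r : ZMod 4, ∀ s, ω p' s = ω p (s + r)) ∨
          (∃ p : Cell n, ∀ s, ω p (s + 2) = ω p s))
      atTop (nhds 0) := by
  have h0 : Tendsto (fun n : ℕ => ((n : ℝ) / q n)) atTop (nhds 0) := by
    have h := hq.inv_tendsto_atTop
    have he : (fun n : ℕ => ((q n : ℝ) / n))⁻¹ = fun n : ℕ => ((n : ℝ) / q n) := by
      funext m
      simp [Pi.inv_apply, inv_div]
    rwa [he] at h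
  have hg : Tendsto (fun n : ℕ => 21 * ((n : ℝ) / q n) ^ 2) atTop (nhds 0) := by
    have h2 := (h0.pow 2).const_mul (21 : ℝ)
    simpa using h2
  apply squeeze_zero' ?_ ?_ hg
  · filter_upwards with n
    rw [puzzleProb]
    positivity
  · filter_upwards [hq.eventually_ge_atTop 1, eventually_ge_atTop 1] with n hr h1
    have hn0 : (0 : ℝ) < n := by exact_mod_cast h1
    have hle : (n : ℝ) ≤ q n := by
      have := (one_le_div hn0).mp hr
      linarith
    exact main_bound (ι n) (fun j => congrFun (hι n) j) h1 (by exact_mod_cast hle)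
end

section
/- For a random n×n puzzle with q jig types, the probability of the event UEA that all solutions are similar satisfies P(UEA) ≤ 4 · q^{−2n(n+1)} · binom((q⁴+q²+2q)/4 + n² − 1, n²). -/
open Finset Filter

namespace S4
abbrev X (q : ℕ) := ZMod 4 → Fin q

instance xAct (q : ℕ) : AddAction (ZMod 4) (X q) where
  vadd r f := fun d => f (d - r)
  zero_vadd f := by funext d; show f (d - 0) = f d; rw [sub_zero]
  add_vadd r s f := by funext d; show f (d - (r + s)) = f (d - r - s); rw [sub_sub]

lemma vadd_apply {q : ℕ} (r : ZMod 4) (f : X q) (d : ZMod 4) : (r +ᵥ f) d = f (d - r) := rfl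

abbrev Q (q : ℕ) := AddAction.orbitRel.Quotient (ZMod 4) (X q)

noncomputable instance (q : ℕ) : Fintype (Q q) := Fintype.ofFinite _
noncomputable instance (q : ℕ) (r : ZMod 4) : Fintype (AddAction.fixedBy (X q) r) :=
  Fintype.ofFinite _

lemma card_X (q : ℕ) : Fintype.card (X q) = q ^ 4 := by
  rw [Fintype.card_fun]; simp

lemma mem_fixed {q : ℕ} (r : ZMod 4) (f : X q) :
    f ∈ AddAction.fixedBy (X q) r ↔ ∀ d, f (d - r) = f d := by
  simp only [AddAction.fixedBy, Set.mem_setOf_eq, funext_iff]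
  exact Iff.rfl

lemma card_fixed0 (q : ℕ) : Fintype.card (AddAction.fixedBy (X q) (0 : ZMod 4)) = q ^ 4 := by
  have h : AddAction.fixedBy (X q) (0 : ZMod 4) = Set.univ := by
    ext f; simp [mem_fixed]
  calc Fintype.card (AddAction.fixedBy (X q) (0 : ZMod 4))
      = Fintype.card (Set.univ : Set (X q)) := Fintype.card_congr (Equiv.setCongr h)
    _ = Fintype.card (X q) := Fintype.card_congr (Equiv.Set.univ _)
    _ = q ^ 4 := card_X q

lemma const_of_fixed1 {q : ℕ} {f : X q} (h : ∀ d : ZMod 4, f (d - 1) = f d) (d : ZMod 4) :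
    f d = f 0 := by
  have h1 : f 0 = f 1 := by have := h 1; norm_num at this; exact this
  have h2 : f 1 = f 2 := by have := h 2; norm_num at this; exact this
  have h3 : f 2 = f 3 := by have := h 3; norm_num at this; exact this
  fin_cases d
  · rfl
  · exact h1.symm
  · exact (h1.trans h2).symm
  · exact ((h1.trans h2).trans h3).symm

lemma card_fixed1 (q : ℕ) : Fintype.card (AddAction.fixedBy (X q) (1 : ZMod 4)) = q := by
  have e : AddAction.fixedBy (X q) (1 : ZMod 4) ≃ Fin q :=
    { toFun := fun f => f.1 0
      invFun := fun c => ⟨fun _ => c, by rw [mem_fixed]; intro d; rfl⟩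
      left_inv := by
        rintro ⟨f, hf⟩
        rw [mem_fixed] at hf
        apply Subtype.ext
        funext d
        exact (const_of_fixed1 hf d).symm
      right_inv := fun c => rfl }
  rw [Fintype.card_congr e, Fintype.card_fin]

end S4

namespace S4

open Finset

variable {n q : ℕ}

/-- The multiset of rotation-classes of the pieces of a carving. -/
def Phi (ω : Carving n q) : Sym (Q q) (n ^ 2) :=
  ⟨(Finset.univ : Finset (Cell n)).val.map
      (fun p => Quotient.mk (AddAction.orbitRel (ZMod 4) (X q)) (ω p)), by
    simp [Finset.card_univ, sq]⟩

open scoped Classical in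
lemma key (ι : Fin q → Fin q) (ω ω' : Carving n q)
    (hv : IsValidCarving ι ω) (hv' : IsValidCarving ι ω')
    (hU : ∀ A B : Assembly n, A.Feasible ι ω → B.Feasible ι ω → PuzzleSimilar A B ω)
    (hPhi : Phi ω = Phi ω') : ∃ r : Fin 4, ω' = rotateCarving^[r.val] ω := by
  classical
  set u : Cell n → Q q := fun p => Quotient.mk (AddAction.orbitRel (ZMod 4) (X q)) (ω p) with hu
  set v : Cell n → Q q := fun p => Quotient.mk (AddAction.orbitRel (ZMod 4) (X q)) (ω' p) with hvv
  have hm : (Finset.univ : Finset (Cell n)).val.map u = (Finset.univ : Finset (Cell n)).val.map v := by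
    have := congrArg Subtype.val hPhi
    exact this
  -- fiber cardinalities agree
  have hc : ∀ c : Q q, Fintype.card {p : Cell n // v p = c} = Fintype.card {p : Cell n // u p = c} := by
    intro c
    have := congrArg (Multiset.count c) hm
    rw [Multiset.count_map, Multiset.count_map] at this
    rw [Fintype.card_subtype, Fintype.card_subtype]
    have hflip : ∀ w : Cell n → Q q,
        (Finset.univ.filter fun p : Cell n => w p = c).card
          = Multiset.card (Multiset.filter (fun a => c = w a) (Finset.univ : Finset (Cell n)).val) := by
      intro w
      have h1 : (Finset.univ.filter fun p : Cell n => w p = c)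
          = (Finset.univ.filter fun p : Cell n => c = w p) :=
        Finset.filter_congr (by intro x _; exact eq_comm)
      rw [h1]
      rfl
    rw [hflip, hflip, this]
  -- build the matching bijection
  let e : ∀ c : Q q, {p : Cell n // v p = c} ≃ {p : Cell n // u p = c} :=
    fun c => Fintype.equivOfCardEq (hc c)
  let σ : Cell n ≃ Cell n := Equiv.ofFiberEquiv e
  have hσ : ∀ p : Cell n, u (σ p) = v p := fun p => Equiv.ofFiberEquiv_map e p
  -- choose rotations
  have hex : ∀ p : Cell n, ∃ g : ZMod 4, ∀ d, ω' p d = ω (σ p) (d - g) := by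
    intro p
    have h1 : Quotient.mk (AddAction.orbitRel (ZMod 4) (X q)) (ω' p)
        = Quotient.mk (AddAction.orbitRel (ZMod 4) (X q)) (ω (σ p)) := (hσ p).symm
    have h2 : (AddAction.orbitRel (ZMod 4) (X q)).r (ω' p) (ω (σ p)) := Quotient.eq''.mp h1
    obtain ⟨g, hg⟩ := h2
    exact ⟨g, fun d => by rw [← hg]; rfl⟩
  choose r hr using hex
  -- the alternative assembly
  let B : Assembly n := ⟨σ.symm, fun p => r (σ.symm p)⟩
  have hBcarv : B.carving ω = ω' := by
    funext c d
    show ω (σ.symm.symm c) (d - r (σ.symm (σ.symm.symm c))) = ω' c d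
    rw [Equiv.symm_symm, Equiv.symm_apply_apply]
    exact (hr c d).symm
  have hplcarv : (planted n).carving ω = ω := by
    funext c d
    show ω ((Equiv.refl (Cell n)).symm c) (d - 0) = ω c d
    rw [sub_zero]; rfl
  have hBfeas : B.Feasible ι ω := by
    intro p p' d hd
    have hval := hv' (σ.symm p) (σ.symm p') d hd
    have e1 := hr (σ.symm p') (d + 2)
    rw [Equiv.apply_symm_apply] at e1
    have e2 := hr (σ.symm p) d
    rw [Equiv.apply_symm_apply] at e2
    show ω p' (d + 2 - r (σ.symm p')) = ι (ω p (d - r (σ.symm p)))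
    rw [← e1, ← e2]
    exact hval
  have hPfeas : (planted n).Feasible ι ω := by
    intro p p' d hd
    show ω p' (d + 2 - 0) = ι (ω p (d - 0))
    rw [sub_zero, sub_zero]
    exact hv p p' d hd
  obtain ⟨r0, hsim⟩ := hU (planted n) B hPfeas hBfeas
  rw [hBcarv, hplcarv] at hsim
  exact ⟨r0, hsim⟩

end S4


namespace S4
lemma const_of_fixed3 {q : ℕ} {f : X q} (h : ∀ d : ZMod 4, f (d - 3) = f d) (d : ZMod 4) :
    f d = f 0 := by
  have h1 : f 1 = f 0 := by have := h 0; norm_num at this; exact this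
  have h2 : f 2 = f 1 := by have := h 1; norm_num at this; exact this
  have h3 : f 3 = f 2 := by have := h 2; norm_num at this; exact this
  fin_cases d
  · rfl
  · exact h1
  · exact h2.trans h1
  · exact (h3.trans h2).trans h1

lemma card_fixed3 (q : ℕ) : Fintype.card (AddAction.fixedBy (X q) (3 : ZMod 4)) = q := by
  have e : AddAction.fixedBy (X q) (3 : ZMod 4) ≃ Fin q :=
    { toFun := fun f => f.1 0
      invFun := fun c => ⟨fun _ => c, by rw [mem_fixed]; intro d; rfl⟩
      left_inv := by
        rintro ⟨f, hf⟩
        rw [mem_fixed] at hf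
        apply Subtype.ext
        funext d
        exact (const_of_fixed3 hf d).symm
      right_inv := fun c => rfl }
  rw [Fintype.card_congr e, Fintype.card_fin]

lemma zmod_cases : ∀ d : ZMod 4, d = 0 ∨ d = 1 ∨ d = 2 ∨ d = 3 := by decide

lemma card_fixed2 (q : ℕ) : Fintype.card (AddAction.fixedBy (X q) (2 : ZMod 4)) = q ^ 2 := by
  have e : AddAction.fixedBy (X q) (2 : ZMod 4) ≃ Fin q × Fin q :=
    { toFun := fun f => (f.1 0, f.1 1)
      invFun := fun c => ⟨fun d => if d = 0 ∨ d = 2 then c.1 else c.2, by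
        rw [mem_fixed]; intro d
        rcases zmod_cases d with rfl | rfl | rfl | rfl <;>
          simp (config := { decide := true })⟩
      left_inv := by
        rintro ⟨f, hf⟩
        rw [mem_fixed] at hf
        have h2 : f 2 = f 0 := by have := hf 0; norm_num at this; exact this
        have h3 : f 3 = f 1 := by have := hf 1; norm_num at this; exact this
        apply Subtype.ext
        funext d
        rcases zmod_cases d with rfl | rfl | rfl | rfl <;>
          simp (config := { decide := true }) [h2, h3]
      right_inv := fun c => by
        apply Prod.ext <;> simp (config := { decide := true }) }
  rw [Fintype.card_congr e, Fintype.card_prod, Fintype.card_fin, sq]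

lemma card_Q (q : ℕ) : Fintype.card (Q q) = (q ^ 4 + q ^ 2 + 2 * q) / 4 := by
  have hb := AddAction.sum_card_fixedBy_eq_card_orbits_mul_card_addGroup (ZMod 4) (X q)
  rw [show (Finset.univ : Finset (ZMod 4)) = {0, 1, 2, 3} from by decide] at hb
  rw [Finset.sum_insert (by decide), Finset.sum_insert (by decide),
    Finset.sum_insert (by decide), Finset.sum_singleton] at hb
  rw [card_fixed0, card_fixed1, card_fixed2, card_fixed3, ZMod.card] at hb
  have h2 : Fintype.card (Q q) = Fintype.card (Quotient (AddAction.orbitRel (ZMod 4) (X q))) := rfl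
  rw [h2]
  omega

open scoped Classical in
lemma card_UEA_le (ι : Fin q → Fin q) :
    (Finset.univ.filter fun ω : Carving n q => IsValidCarving ι ω ∧
        ∀ A B : Assembly n, A.Feasible ι ω → B.Feasible ι ω → PuzzleSimilar A B ω).card ≤
      4 * ((q ^ 4 + q ^ 2 + 2 * q) / 4 + n ^ 2 - 1).choose (n ^ 2) := by
  classical
  set S : Finset (Carving n q) := Finset.univ.filter fun ω : Carving n q =>
    IsValidCarving ι ω ∧
      ∀ A B : Assembly n, A.Feasible ι ω → B.Feasible ι ω → PuzzleSimilar A B ω with hS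
  have h1 : S.card ≤ 4 * (S.image Phi).card := by
    apply Finset.card_le_mul_card_image
    intro a ha
    obtain ⟨ω₀, hω₀S, hω₀⟩ := Finset.mem_image.mp ha
    have hω₀' := (Finset.mem_filter.mp hω₀S).2
    have hsub : (S.filter fun ω => Phi ω = a) ⊆
        (Finset.univ : Finset (Fin 4)).image fun r => rotateCarving^[r.val] ω₀ := by
      intro ω hω
      rw [Finset.mem_filter] at hω
      obtain ⟨hωS, hωa⟩ := hω
      have hω' := (Finset.mem_filter.mp hωS).2
      obtain ⟨r, hrr⟩ := key ι ω₀ ω hω₀'.1 hω'.1 hω₀'.2 (by rw [hω₀, hωa])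
      exact Finset.mem_image.mpr ⟨r, Finset.mem_univ r, hrr.symm⟩
    calc (S.filter fun ω => Phi ω = a).card
        ≤ ((Finset.univ : Finset (Fin 4)).image fun r => rotateCarving^[r.val] ω₀).card :=
          Finset.card_le_card hsub
      _ ≤ (Finset.univ : Finset (Fin 4)).card := Finset.card_image_le
      _ = 4 := by simp
  have h2 : (S.image Phi).card ≤ Fintype.card (Sym (Q q) (n ^ 2)) := Finset.card_le_univ _
  have h3 : Fintype.card (Sym (Q q) (n ^ 2))
      = ((q ^ 4 + q ^ 2 + 2 * q) / 4 + n ^ 2 - 1).choose (n ^ 2) := by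
    rw [Sym.card_sym_eq_choose, card_Q]
  calc S.card ≤ 4 * (S.image Phi).card := h1
    _ ≤ 4 * Fintype.card (Sym (Q q) (n ^ 2)) := by omega
    _ = _ := by rw [h3]

/-- Predecessor inside `Fin n`. -/
def pre {n : ℕ} (i : Fin n) : Fin n := ⟨i.val - 1, lt_of_le_of_lt (Nat.sub_le _ _) i.isLt⟩

/-- The domain of free side choices. -/
abbrev Dom (n q : ℕ) := (Cell n → Fin q) × (Cell n → Fin q) × (Fin n → Fin q) × (Fin n → Fin q)

/-- The carving produced from free side choices. -/
def eCarv (ι : Fin q → Fin q) (x : Dom n q) : Carving n q := fun p d =>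
  if d = 0 then x.1 p
  else if d = 1 then x.2.1 p
  else if d = 2 then
    (if p.1.val = 0 then x.2.2.1 p.2 else ι (x.1 (pre p.1, p.2)))
  else
    (if p.2.val = 0 then x.2.2.2 p.1 else ι (x.2.1 (p.1, pre p.2)))

lemma eCarv0 (ι : Fin q → Fin q) (x : Dom n q) (p : Cell n) : eCarv ι x p 0 = x.1 p := rfl
lemma eCarv1 (ι : Fin q → Fin q) (x : Dom n q) (p : Cell n) : eCarv ι x p 1 = x.2.1 p := rfl
lemma eCarv2 (ι : Fin q → Fin q) (x : Dom n q) (p : Cell n) :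
    eCarv ι x p 2 = if p.1.val = 0 then x.2.2.1 p.2 else ι (x.1 (pre p.1, p.2)) := rfl
lemma eCarv3 (ι : Fin q → Fin q) (x : Dom n q) (p : Cell n) :
    eCarv ι x p 3 = if p.2.val = 0 then x.2.2.2 p.1 else ι (x.2.1 (p.1, pre p.2)) := rfl

lemma eCarv_valid (ι : Fin q → Fin q) (hι : ι ∘ ι = id) (x : Dom n q) :
    IsValidCarving ι (eCarv ι x) := by
  have hιι : ∀ a, ι (ι a) = a := fun a => congrFun hι a
  intro p p' d hd
  rw [cellZ, cellZ, Prod.ext_iff] at hd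
  obtain ⟨ha, hb⟩ := hd
  rcases zmod_cases d with rfl | rfl | rfl | rfl
  · -- d = 0 : p' is to the right of p
    simp (config := { decide := true }) [dirVec] at ha hb
    have h1 : p'.1.val = p.1.val + 1 := by exact_mod_cast ha
    have h2 : p'.2 = p.2 := Fin.ext (by exact_mod_cast hb)
    show eCarv ι x p' (0 + 2) = ι (eCarv ι x p 0)
    rw [show (0 + 2 : ZMod 4) = 2 from by decide, eCarv2, eCarv0, if_neg (by omega)]
    have hpre : pre p'.1 = p.1 := Fin.ext (by simp [pre, h1])
    rw [hpre, h2]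
  · -- d = 1 : p' is above p
    simp (config := { decide := true }) [dirVec] at ha hb
    have h1 : p'.2.val = p.2.val + 1 := by exact_mod_cast hb
    have h2 : p'.1 = p.1 := Fin.ext (by exact_mod_cast ha)
    show eCarv ι x p' (1 + 2) = ι (eCarv ι x p 1)
    rw [show (1 + 2 : ZMod 4) = 3 from by decide, eCarv3, eCarv1, if_neg (by omega)]
    have hpre : pre p'.2 = p.2 := Fin.ext (by simp [pre, h1])
    rw [hpre, h2]
  · -- d = 2 : p' is to the left of p
    simp (config := { decide := true }) [dirVec] at ha hb
    have h1 : p.1.val = p'.1.val + 1 := by omega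
    have h2 : p'.2 = p.2 := Fin.ext (by exact_mod_cast hb)
    show eCarv ι x p' (2 + 2) = ι (eCarv ι x p 2)
    rw [show (2 + 2 : ZMod 4) = 0 from by decide, eCarv0, eCarv2, if_neg (by omega)]
    have hpre : pre p.1 = p'.1 := Fin.ext (by simp [pre, h1])
    rw [hpre, ← h2, Prod.mk.eta, hιι]
  · -- d = 3 : p' is below p
    simp (config := { decide := true }) [dirVec] at ha hb
    have h1 : p.2.val = p'.2.val + 1 := by omega
    have h2 : p'.1 = p.1 := Fin.ext (by exact_mod_cast ha)
    show eCarv ι x p' (3 + 2) = ι (eCarv ι x p 3)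
    rw [show (3 + 2 : ZMod 4) = 1 from by decide, eCarv1, eCarv3, if_neg (by omega)]
    have hpre : pre p.2 = p'.2 := Fin.ext (by simp [pre, h1])
    rw [hpre, ← h2, Prod.mk.eta, hιι]

lemma eCarv_inj (hn : 1 ≤ n) (ι : Fin q → Fin q) : Function.Injective (eCarv (n := n) ι) := by
  intro x y h
  have h0 : x.1 = y.1 := funext fun p => by
    have := congrFun (congrFun h p) 0; rwa [eCarv0, eCarv0] at this
  have h1 : x.2.1 = y.2.1 := funext fun p => by
    have := congrFun (congrFun h p) 1; rwa [eCarv1, eCarv1] at this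
  have h2 : x.2.2.1 = y.2.2.1 := funext fun j => by
    have := congrFun (congrFun h ((⟨0, hn⟩ : Fin n), j)) 2
    rwa [eCarv2, eCarv2, if_pos rfl, if_pos rfl] at this
  have h3 : x.2.2.2 = y.2.2.2 := funext fun i => by
    have := congrFun (congrFun h (i, (⟨0, hn⟩ : Fin n))) 3
    rwa [eCarv3, eCarv3, if_pos rfl, if_pos rfl] at this
  obtain ⟨a, b, c, d⟩ := x
  obtain ⟨a', b', c', d'⟩ := y
  simp only at h0 h1 h2 h3
  rw [h0, h1, h2, h3]

open scoped Classical in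
lemma denom_ge (hn : 1 ≤ n) (ι : Fin q → Fin q) (hι : ι ∘ ι = id) :
    q ^ (2 * n * (n + 1)) ≤
      (Finset.univ.filter fun ω : Carving n q => IsValidCarving ι ω).card := by
  classical
  have hle : (Finset.univ : Finset (Dom n q)).card ≤
      (Finset.univ.filter fun ω : Carving n q => IsValidCarving ι ω).card :=
    Finset.card_le_card_of_injOn (eCarv ι)
    (fun x _ => Finset.mem_filter.mpr ⟨Finset.mem_univ _, eCarv_valid ι hι x⟩)
    ((eCarv_inj hn ι).injOn)
  rw [Finset.card_univ] at hle
  refine le_trans (le_of_eq ?_) hle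
  have : Fintype.card (Dom n q) = q ^ (n * n) * (q ^ (n * n) * (q ^ n * q ^ n)) := by
    simp [Fintype.card_fun]
  rw [this, ← pow_add, ← pow_add, ← pow_add]
  congr 1
  ring

end S4

/-- For a random `n × n` puzzle with `q` jig types, the probability of the
event UEA that all solutions are similar satisfies
`P(UEA) ≤ 4 · q^{−2n(n+1)} · C((q⁴+q²+2q)/4 + n² − 1, n²)`. -/




theorem statement_4 (n q : ℕ) (hn : 1 ≤ n) (hq : 2 ≤ q)
    (ι : Fin q → Fin q) (hι : ι ∘ ι = id) :
    puzzleProb ι (fun ω : Carving n q =>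
        ∀ A B : Assembly n, A.Feasible ι ω → B.Feasible ι ω → PuzzleSimilar A B ω) ≤
      4 * (q : ℝ) ^ (-(2 * (n : ℤ) * (n + 1))) *
        (Nat.choose ((q ^ 4 + q ^ 2 + 2 * q) / 4 + n ^ 2 - 1) (n ^ 2) : ℝ) := by
  classical
  rw [puzzleProb]
  set C : ℕ := Nat.choose ((q ^ 4 + q ^ 2 + 2 * q) / 4 + n ^ 2 - 1) (n ^ 2) with hC
  set E : ℕ := 2 * n * (n + 1) with hE
  have hN : ((Finset.univ.filter fun ω : Carving n q => IsValidCarving ι ω ∧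
      ∀ A B : Assembly n, A.Feasible ι ω → B.Feasible ι ω → PuzzleSimilar A B ω).card : ℝ)
      ≤ 4 * (C : ℝ) := by
    have := S4.card_UEA_le (n := n) (q := q) ι
    calc ((Finset.univ.filter fun ω : Carving n q => IsValidCarving ι ω ∧
        ∀ A B : Assembly n, A.Feasible ι ω → B.Feasible ι ω → PuzzleSimilar A B ω).card : ℝ)
        ≤ ((4 * C : ℕ) : ℝ) := by exact_mod_cast this
      _ = 4 * (C : ℝ) := by push_cast; ring
  have hD : ((q : ℝ)) ^ E ≤
      ((Finset.univ.filter fun ω : Carving n q => IsValidCarving ι ω).card : ℝ) := by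
    exact_mod_cast S4.denom_ge hn ι hι
  have hq0 : (0 : ℝ) < (q : ℝ) ^ E := by
    have : (0 : ℝ) < (q : ℝ) := by exact_mod_cast Nat.lt_of_lt_of_le (by norm_num) hq
    positivity
  have hzp : (q : ℝ) ^ (-(2 * (n : ℤ) * (n + 1))) = ((q : ℝ) ^ E)⁻¹ := by
    have hcast : (-(2 * (n : ℤ) * (n + 1))) = -(E : ℤ) := by push_cast [hE]; ring
    rw [hcast, zpow_neg, zpow_natCast]
  calc ((Finset.univ.filter fun ω : Carving n q => IsValidCarving ι ω ∧
      ∀ A B : Assembly n, A.Feasible ι ω → B.Feasible ι ω → PuzzleSimilar A B ω).card : ℝ) /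
      ((Finset.univ.filter fun ω : Carving n q => IsValidCarving ι ω).card : ℝ)
      ≤ ((Finset.univ.filter fun ω : Carving n q => IsValidCarving ι ω ∧
        ∀ A B : Assembly n, A.Feasible ι ω → B.Feasible ι ω → PuzzleSimilar A B ω).card : ℝ) /
        ((q : ℝ) ^ E) := by
        exact div_le_div_of_nonneg_left (by positivity) hq0 hD
    _ ≤ (4 * (C : ℝ)) / ((q : ℝ) ^ E) := by
        exact div_le_div_of_nonneg_right hN hq0.le
    _ = 4 * (q : ℝ) ^ (-(2 * (n : ℤ) * (n + 1))) * (C : ℝ) := by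
        rw [hzp]; ring
end

section
/- Let c > 0 be fixed, let q = q(n) ≥ c·n, and let k = k(n) be a sequence of positive integers with k = o(n^{1/12}). Then the probability that the planted assembly of a random n×n puzzle with q jig types is k-good tends to 1 as n → ∞. -/
open Finset Filter

namespace S7
open Finset

lemma cellZ_inj {n : ℕ} : Function.Injective (cellZ (n := n)) := by
  intro a b h
  simp only [cellZ, Prod.mk.injEq] at h
  exact Prod.ext (Fin.ext (by exact_mod_cast h.1)) (Fin.ext (by exact_mod_cast h.2))

lemma dirVec_add_two (d : ZMod 4) : dirVec d + dirVec (d + 2) = 0 := by revert d; decide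

lemma fin2_cast_inj : ∀ a b : Fin 2, ((a.val : ZMod 4)) = ((b.val : ZMod 4)) → a = b := by decide

lemma fin2_cast_ne_add_two : ∀ a b : Fin 2, ((a.val : ZMod 4)) ≠ ((b.val : ZMod 4)) + 2 := by decide

/-- evaluate a carving at a side with direction in {0,1} -/
def evalS {n q : ℕ} (ω : Carving n q) (s : Cell n × Fin 2) : Fin q :=
  ω s.1 ((s.2.val : ZMod 4))

end S7
namespace S7
open Finset

lemma zmod_add_two_ne (d : ZMod 4) : ¬(d + 2 = d) := by revert d; decide
lemma zmod_add_two_add_two (d : ZMod 4) : d + 2 + 2 = d := by revert d; decide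

variable {n q : ℕ} (ι : Fin q → Fin q)

open scoped Classical in
def upd (ω : Carving n q) (s : Cell n × Fin 2) (u : Fin q) : Carving n q :=
  fun x δ =>
    if x = s.1 ∧ δ = (s.2.val : ZMod 4) then u
    else if cellZ x = cellZ s.1 + dirVec (s.2.val : ZMod 4) ∧ δ = (s.2.val : ZMod 4) + 2 then ι u
    else ω x δ

lemma upd_valid (hι : ι ∘ ι = id) {ω : Carving n q} (hω : IsValidCarving ι ω)
    (s : Cell n × Fin 2) (u : Fin q) : IsValidCarving ι (upd ι ω s u) := by
  classical
  have hii : ∀ j, ι (ι j) = j := fun j => congrFun hι j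
  intro p p' d hadj
  show (if p' = s.1 ∧ d + 2 = (s.2.val : ZMod 4) then u
    else if cellZ p' = cellZ s.1 + dirVec (s.2.val : ZMod 4) ∧ d + 2 = (s.2.val : ZMod 4) + 2
      then ι u else ω p' (d + 2)) =
    ι (if p = s.1 ∧ d = (s.2.val : ZMod 4) then u
      else if cellZ p = cellZ s.1 + dirVec (s.2.val : ZMod 4) ∧ d = (s.2.val : ZMod 4) + 2
        then ι u else ω p d)
  by_cases hA : p = s.1 ∧ d = (s.2.val : ZMod 4)
  · rw [if_pos hA, if_neg, if_pos ⟨by rw [hadj, hA.1, hA.2], by rw [hA.2]⟩]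
    rintro ⟨-, h2⟩
    rw [hA.2] at h2
    exact zmod_add_two_ne _ h2
  · by_cases hB : cellZ p = cellZ s.1 + dirVec (s.2.val : ZMod 4) ∧ d = (s.2.val : ZMod 4) + 2
    · have hp' : cellZ p' = cellZ s.1 := by
        rw [hadj, hB.1, hB.2, add_assoc, dirVec_add_two, add_zero]
      rw [if_neg hA, if_pos hB, if_pos ⟨cellZ_inj hp', by rw [hB.2, zmod_add_two_add_two]⟩, hii]
    · rw [if_neg hA, if_neg hB, if_neg, if_neg]
      · exact hω p p' d hadj
      · rintro ⟨h1, h2⟩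
        apply hA
        have hd : d = (s.2.val : ZMod 4) := add_right_cancel h2
        refine ⟨?_, hd⟩
        apply cellZ_inj
        have h3 : cellZ p + dirVec d = cellZ s.1 + dirVec ((s.2.val : ZMod 4)) :=
          hadj.symm.trans h1
        rw [hd] at h3
        exact add_right_cancel h3
      · rintro ⟨h1, h2⟩
        apply hB
        have hd : d = (s.2.val : ZMod 4) + 2 := by rw [← h2, zmod_add_two_add_two]
        refine ⟨?_, hd⟩
        have h3 : cellZ p + (dirVec d + dirVec (d + 2)) = cellZ s.1 + dirVec (d + 2) := by
          rw [← add_assoc, ← hadj, h1, hd, zmod_add_two_add_two]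
        rw [dirVec_add_two, add_zero] at h3
        rw [h3, hd, zmod_add_two_add_two]

lemma upd_apply_untouched {ω : Carving n q} {s : Cell n × Fin 2} {u : Fin q}
    {x : Cell n} {δ : ZMod 4} (h1 : ¬(x = s.1 ∧ δ = (s.2.val : ZMod 4)))
    (h2 : ¬(cellZ x = cellZ s.1 + dirVec (s.2.val : ZMod 4) ∧ δ = (s.2.val : ZMod 4) + 2)) :
    upd ι ω s u x δ = ω x δ := by
  unfold upd
  rw [if_neg h1, if_neg h2]

lemma upd_evalS_self {ω : Carving n q} (s : Cell n × Fin 2) (u : Fin q) :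
    evalS (upd ι ω s u) s = u := by
  unfold evalS upd
  rw [if_pos ⟨rfl, rfl⟩]

lemma upd_evalS_ne {ω : Carving n q} {s s' : Cell n × Fin 2} (h : s' ≠ s) (u : Fin q) :
    evalS (upd ι ω s u) s' = evalS ω s' := by
  unfold evalS
  apply upd_apply_untouched
  · rintro ⟨h1, h2⟩
    exact h (Prod.ext h1 (fin2_cast_inj _ _ h2))
  · rintro ⟨-, h2⟩
    exact fin2_cast_ne_add_two _ _ h2

def updL : Carving n q → List ((Cell n × Fin 2) × Fin q) → Carving n q
  | ω, [] => ω
  | ω, (p :: L) => updL (upd ι ω p.1 p.2) L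

lemma updL_valid (hι : ι ∘ ι = id) (L : List ((Cell n × Fin 2) × Fin q)) :
    ∀ {ω : Carving n q}, IsValidCarving ι ω → IsValidCarving ι (updL ι ω L) := by
  induction L with
  | nil => intro ω hω; exact hω
  | cons p L ih => intro ω hω; exact ih (upd_valid ι hι hω p.1 p.2)

lemma updL_evalS_ne {s : Cell n × Fin 2} (L : List ((Cell n × Fin 2) × Fin q)) :
    ∀ (ω : Carving n q), (∀ p ∈ L, p.1 ≠ s) → evalS (updL ι ω L) s = evalS ω s := by
  induction L with
  | nil => intro ω _; rfl
  | cons p L ih =>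
    intro ω h
    show evalS (updL ι (upd ι ω p.1 p.2) L) s = evalS ω s
    rw [ih _ (fun r hr => h r (List.mem_cons_of_mem _ hr)),
      upd_evalS_ne ι (fun hs => (h p (List.mem_cons_self)) hs.symm)]

lemma updL_evalS_mem {b : Cell n × Fin 2} {u : Fin q}
    (L : List ((Cell n × Fin 2) × Fin q)) :
    ∀ (ω : Carving n q), (b, u) ∈ L → (L.map Prod.fst).Nodup →
      evalS (updL ι ω L) b = u := by
  induction L with
  | nil => intro ω hmem _; simp at hmem
  | cons p L ih =>
    intro ω hmem hnd
    rcases List.mem_cons.mp hmem with h | h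
    · show evalS (updL ι (upd ι ω p.1 p.2) L) b = u
      have hb : b = p.1 := by rw [← h]
      have hnotin : ∀ r ∈ L, r.1 ≠ b := by
        intro r hr hrb
        apply (List.nodup_cons.mp hnd).1
        rw [← hrb.trans hb]
        exact List.mem_map_of_mem hr
      rw [updL_evalS_ne ι L _ hnotin, hb]
      have hu : u = p.2 := by rw [← h]
      rw [hu]
      exact upd_evalS_self ι p.1 p.2
    · exact ih _ h (List.nodup_cons.mp hnd).2

lemma updL_apply_untouched {x : Cell n} {δ : ZMod 4}
    (L : List ((Cell n × Fin 2) × Fin q)) :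
    ∀ (ω : Carving n q),
      (∀ p ∈ L, ¬(x = p.1.1 ∧ δ = (p.1.2.val : ZMod 4)) ∧
        ¬(cellZ x = cellZ p.1.1 + dirVec (p.1.2.val : ZMod 4) ∧ δ = (p.1.2.val : ZMod 4) + 2)) →
      updL ι ω L x δ = ω x δ := by
  induction L with
  | nil => intro ω _; rfl
  | cons p L ih =>
    intro ω h
    show updL ι (upd ι ω p.1 p.2) L x δ = ω x δ
    rw [ih _ (fun r hr => h r (List.mem_cons_of_mem _ hr)),
      upd_apply_untouched ι (h p (List.mem_cons_self)).1 (h p (List.mem_cons_self)).2]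

end S7
namespace S7
open Finset

open scoped Classical in
lemma core {n q : ℕ} {ι : Fin q → Fin q} (hι : ι ∘ ι = id) (t : ℕ)
    (σ : Fin t → (Cell n × Fin 2) × (Cell n × Fin 2))
    (hdist : Function.Injective fun x : Fin t × Fin 2 =>
      if x.2 = 0 then (σ x.1).1 else (σ x.1).2) :
    (univ.filter fun ω : Carving n q => IsValidCarving ι ω ∧
        ∀ i, evalS ω (σ i).2 = evalS ω (σ i).1 ∨ evalS ω (σ i).2 = ι (evalS ω (σ i).1)).card
      * q ^ t
    ≤ 2 ^ t * (univ.filter fun ω : Carving n q => IsValidCarving ι ω).card := by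
  have hbne : Function.Injective fun i : Fin t => (σ i).2 := by
    intro i j h
    have := hdist (a₁ := (i, 1)) (a₂ := (j, 1)) (by simpa using h)
    simpa [Prod.ext_iff] using this
  have hab : ∀ i j : Fin t, (σ i).1 ≠ (σ j).2 := by
    intro i j h
    have := hdist (a₁ := (i, 0)) (a₂ := (j, 1)) (by simpa using h)
    simp [Prod.ext_iff] at this
  set E := univ.filter fun ω : Carving n q => IsValidCarving ι ω ∧
      ∀ i, evalS ω (σ i).2 = evalS ω (σ i).1 ∨ evalS ω (σ i).2 = ι (evalS ω (σ i).1) with hE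
  set V := univ.filter fun ω : Carving n q => IsValidCarving ι ω with hV
  -- the list of updates
  set L : Carving n q → (Fin t → Fin q) → List ((Cell n × Fin 2) × Fin q) :=
    fun _ v => List.ofFn fun i => ((σ i).2, v i) with hLdef
  have hkeys : ∀ ω v, ((L ω v).map Prod.fst).Nodup := by
    intro ω v
    rw [hLdef]
    simp only [List.map_ofFn]
    exact List.nodup_ofFn.mpr (by intro i j h; exact hbne h)
  have hmemL : ∀ ω v (i : Fin t), ((σ i).2, v i) ∈ L ω v := by
    intro ω v i
    rw [hLdef]
    exact List.mem_ofFn.mpr ⟨i, rfl⟩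
  have hkeyform : ∀ ω v, ∀ p ∈ L ω v, ∃ i : Fin t, p.1 = (σ i).2 := by
    intro ω v p hp
    rw [hLdef] at hp
    obtain ⟨i, hi⟩ := List.mem_ofFn.mp hp
    exact ⟨i, by rw [← hi]⟩
  have key : (E ×ˢ (univ : Finset (Fin t → Fin q))).card ≤
      (V ×ˢ (univ : Finset (Fin t → Fin 2))).card := by
    apply Finset.card_le_card_of_injOn
      (fun P => (updL ι P.1 (L P.1 P.2),
        fun i => if evalS P.1 (σ i).2 = evalS P.1 (σ i).1 then (0 : Fin 2) else 1))
    · rintro ⟨ω, v⟩ hP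
      rw [Finset.mem_coe, Finset.mem_product] at hP
      obtain ⟨hω, -⟩ := hP
      rw [hE, Finset.mem_filter] at hω
      rw [Finset.mem_coe, Finset.mem_product, hV, Finset.mem_filter]
      exact ⟨⟨Finset.mem_univ _, updL_valid ι hι _ hω.2.1⟩, Finset.mem_univ _⟩
    · rintro ⟨ω₁, v₁⟩ hP1 ⟨ω₂, v₂⟩ hP2 heq
      rw [Finset.mem_coe, Finset.mem_product, hE, Finset.mem_filter] at hP1 hP2
      obtain ⟨⟨-, hval₁, hm₁⟩, -⟩ := hP1
      obtain ⟨⟨-, hval₂, hm₂⟩, -⟩ := hP2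
      rw [Prod.ext_iff] at heq
      obtain ⟨h1, h2⟩ := heq
      simp only at h1 h2
      -- values of v
      have hv : v₁ = v₂ := by
        funext i
        have e1 : evalS (updL ι ω₁ (L ω₁ v₁)) (σ i).2 = v₁ i :=
          updL_evalS_mem ι _ _ (hmemL ω₁ v₁ i) (hkeys ω₁ v₁)
        have e2 : evalS (updL ι ω₂ (L ω₂ v₂)) (σ i).2 = v₂ i :=
          updL_evalS_mem ι _ _ (hmemL ω₂ v₂ i) (hkeys ω₂ v₂)
        rw [← e1, ← e2, h1]
      -- values at the a-sides are unchanged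
      have hAside : ∀ (ω : Carving n q) v i, evalS (updL ι ω (L ω v)) (σ i).1 = evalS ω (σ i).1 := by
        intro ω v i
        apply updL_evalS_ne
        intro p hp hpa
        obtain ⟨j, hj⟩ := hkeyform ω v p hp
        exact hab i j ((hj ▸ hpa).symm)
      have hA : ∀ i, evalS ω₁ (σ i).1 = evalS ω₂ (σ i).1 := by
        intro i
        rw [← hAside ω₁ v₁ i, ← hAside ω₂ v₂ i, h1]
      -- values at the b-sides agree
      have hB : ∀ i, evalS ω₁ (σ i).2 = evalS ω₂ (σ i).2 := by
        intro i
        have hβ := congrFun h2 i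
        by_cases hc1 : evalS ω₁ (σ i).2 = evalS ω₁ (σ i).1
        · by_cases hc2 : evalS ω₂ (σ i).2 = evalS ω₂ (σ i).1
          · rw [hc1, hc2, hA i]
          · rw [if_pos hc1, if_neg hc2] at hβ
            exact absurd hβ (by decide)
        · by_cases hc2 : evalS ω₂ (σ i).2 = evalS ω₂ (σ i).1
          · rw [if_neg hc1, if_pos hc2] at hβ
            exact absurd hβ (by decide)
          · have e1 : evalS ω₁ (σ i).2 = ι (evalS ω₁ (σ i).1) := (hm₁ i).resolve_left hc1
            have e2 : evalS ω₂ (σ i).2 = ι (evalS ω₂ (σ i).1) := (hm₂ i).resolve_left hc2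
            rw [e1, e2, hA i]
      -- the carvings agree
      have hω : ω₁ = ω₂ := by
        funext x δ
        by_cases hT1 : ∃ i : Fin t, x = (σ i).2.1 ∧ δ = (((σ i).2.2.val : ZMod 4))
        · obtain ⟨i, hx, hδ⟩ := hT1
          have e1 : ω₁ x δ = evalS ω₁ (σ i).2 := by rw [hx, hδ]; rfl
          have e2 : ω₂ x δ = evalS ω₂ (σ i).2 := by rw [hx, hδ]; rfl
          rw [e1, e2, hB i]
        · by_cases hT2 : ∃ i : Fin t,
            cellZ x = cellZ (σ i).2.1 + dirVec (((σ i).2.2.val : ZMod 4)) ∧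
              δ = (((σ i).2.2.val : ZMod 4)) + 2
          · obtain ⟨i, hx, hδ⟩ := hT2
            have e1 : ω₁ x δ = ι (evalS ω₁ (σ i).2) := by
              rw [hδ]; exact hval₁ (σ i).2.1 x _ hx
            have e2 : ω₂ x δ = ι (evalS ω₂ (σ i).2) := by
              rw [hδ]; exact hval₂ (σ i).2.1 x _ hx
            rw [e1, e2, hB i]
          · push_neg at hT1 hT2
            have huntouched : ∀ (ω : Carving n q) v, updL ι ω (L ω v) x δ = ω x δ := by
              intro ω v
              apply updL_apply_untouched
              intro p hp
              obtain ⟨j, hj⟩ := hkeyform ω v p hp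
              rw [hj]
              constructor
              · rintro ⟨ha, hb⟩
                exact hT1 j ha hb
              · rintro ⟨ha, hb⟩
                exact hT2 j ha hb
            rw [← huntouched ω₁ v₁, ← huntouched ω₂ v₂, h1]
      exact Prod.ext hω hv
  rw [Finset.card_product, Finset.card_product, Finset.card_univ, Finset.card_univ,
    Fintype.card_fun, Fintype.card_fun, Fintype.card_fin, Fintype.card_fin,
    Fintype.card_fin] at key
  calc (univ.filter fun ω : Carving n q => IsValidCarving ι ω ∧
        ∀ i, evalS ω (σ i).2 = evalS ω (σ i).1 ∨ evalS ω (σ i).2 = ι (evalS ω (σ i).1)).card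
      * q ^ t = E.card * q ^ t := rfl
    _ ≤ V.card * 2 ^ t := key
    _ = 2 ^ t * V.card := Nat.mul_comm _ _

end S7
namespace S7
open Finset

lemma extract {α β : Type*} [DecidableEq α] :
    ∀ (t : ℕ) (s : Finset β) (F : β → Finset α),
      (∀ j ∈ s, ∀ j' ∈ s, j ≠ j' → Disjoint (F j) (F j')) →
      t ≤ ∑ j ∈ s, (F j).card / 2 →
      ∃ g : Fin t → α × α,
        (∀ i, ∃ j ∈ s, (g i).1 ∈ F j ∧ (g i).2 ∈ F j) ∧
        Function.Injective (fun x : Fin t × Fin 2 => if x.2 = 0 then (g x.1).1 else (g x.1).2)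
  | 0, s, F, _, _ => by
    refine ⟨Fin.elim0, fun i => i.elim0, fun z _ _ => z.1.elim0⟩
  | (t+1), s, F, hdisj, hsum => by
    classical
    have hex : ∃ j0 ∈ s, 2 ≤ (F j0).card := by
      by_contra hcon
      push_neg at hcon
      have : ∑ j ∈ s, (F j).card / 2 = 0 := by
        apply Finset.sum_eq_zero
        intro j hj
        have := hcon j hj
        omega
      omega
    obtain ⟨j0, hj0s, hj0c⟩ := hex
    obtain ⟨x, hx, y, hy, hxy⟩ := Finset.one_lt_card.mp (show 1 < (F j0).card by omega)
    have hsub : ({x, y} : Finset α) ⊆ F j0 := by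
      intro z hz
      rw [Finset.mem_insert, Finset.mem_singleton] at hz
      rcases hz with rfl | rfl <;> assumption
    have hdisj' : ∀ j ∈ s, ∀ j' ∈ s, j ≠ j' →
        Disjoint (F j \ {x, y}) (F j' \ {x, y}) :=
      fun j hj j' hj' hne => Finset.disjoint_of_subset_left (Finset.sdiff_subset)
        (Finset.disjoint_of_subset_right (Finset.sdiff_subset) (hdisj j hj j' hj' hne))
    have hsum' : t ≤ ∑ j ∈ s, (F j \ {x, y}).card / 2 := by
      have hEq : ∀ j ∈ s, j ≠ j0 → (F j \ {x, y}).card / 2 = (F j).card / 2 := by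
        intro j hj hne
        congr 1
        apply congrArg
        apply Finset.sdiff_eq_self_of_disjoint
        exact Finset.disjoint_of_subset_right hsub (hdisj j hj j0 hj0s hne)
      have hj0 : (F j0 \ {x, y}).card / 2 = (F j0).card / 2 - 1 := by
        rw [Finset.card_sdiff_of_subset hsub, Finset.card_pair hxy]
        omega
      rw [← Finset.add_sum_erase _ _ hj0s] at hsum ⊢
      rw [hj0]
      have : ∑ j ∈ s.erase j0, (F j \ {x, y}).card / 2 = ∑ j ∈ s.erase j0, (F j).card / 2 :=
        Finset.sum_congr rfl fun j hj =>
          hEq j (Finset.mem_of_mem_erase hj) (Finset.ne_of_mem_erase hj)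
      omega
    obtain ⟨g', hg'₁, hg'₂⟩ := extract t s (fun j => F j \ {x, y}) hdisj' hsum'
    refine ⟨Fin.cons (x, y) g', ?_, ?_⟩
    · intro i
      refine Fin.cases ?_ ?_ i
      · exact ⟨j0, hj0s, hx, hy⟩
      · intro j
        obtain ⟨j', hj's, h1, h2⟩ := hg'₁ j
        exact ⟨j', hj's, by simpa using Finset.sdiff_subset h1,
          by simpa using Finset.sdiff_subset h2⟩
    · have hg'mem : ∀ (i : Fin t) (e : Fin 2),
          (if e = 0 then (g' i).1 else (g' i).2) ≠ x ∧
          (if e = 0 then (g' i).1 else (g' i).2) ≠ y := by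
        intro i e
        obtain ⟨j, hjs, h1, h2⟩ := hg'₁ i
        have hmem : (if e = 0 then (g' i).1 else (g' i).2) ∈ F j \ ({x, y} : Finset α) := by
          split
          · exact h1
          · exact h2
        rw [Finset.mem_sdiff, Finset.mem_insert, Finset.mem_singleton] at hmem
        exact ⟨fun h => hmem.2 (Or.inl h), fun h => hmem.2 (Or.inr h)⟩
      have hfin2 : ∀ e : Fin 2, e = 0 ∨ e = 1 := by decide
      rintro ⟨i, e⟩ ⟨i', e'⟩ hzz
      simp only at hzz
      rcases Fin.eq_zero_or_eq_succ i with rfl | ⟨j1, rfl⟩ <;>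
        rcases Fin.eq_zero_or_eq_succ i' with rfl | ⟨j2, rfl⟩
      · rw [Fin.cons_zero] at hzz
        rcases hfin2 e with rfl | rfl <;> rcases hfin2 e' with rfl | rfl <;>
          simp_all
      · rw [Fin.cons_zero, Fin.cons_succ] at hzz
        exfalso
        rcases hfin2 e with rfl | rfl
        · exact (hg'mem j2 e').1 (by simpa using hzz.symm)
        · exact (hg'mem j2 e').2 (by simpa using hzz.symm)
      · rw [Fin.cons_zero, Fin.cons_succ] at hzz
        exfalso
        rcases hfin2 e' with rfl | rfl
        · exact (hg'mem j1 e).1 (by simpa using hzz)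
        · exact (hg'mem j1 e).2 (by simpa using hzz)
      · rw [Fin.cons_succ, Fin.cons_succ] at hzz
        have := hg'₂ (a₁ := (j1, e)) (a₂ := (j2, e')) hzz
        rw [Prod.ext_iff] at this
        obtain ⟨h1, h2⟩ := this
        simp only at h1 h2
        rw [Prod.ext_iff]
        exact ⟨by simp [h1], h2⟩

lemma planted_carving {n q : ℕ} (ω : Carving n q) : (planted n).carving ω = ω := by
  funext c d
  simp [Assembly.carving, planted]

lemma planted_feasible_iff {n q : ℕ} (ι : Fin q → Fin q) (ω : Carving n q) :
    (planted n).Feasible ι ω ↔ IsValidCarving ι ω := by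
  constructor
  · intro h p p' d hadj
    have := h p p' d (by simpa [planted] using hadj)
    simpa [planted] using this
  · intro h p p' d hadj
    have := h p p' d (by simpa [planted] using hadj)
    simpa [planted] using this

open scoped Classical in
/-- dual edges of the window -/
noncomputable def Edg (n a b k : ℕ) : Finset (Cell n × Cell n × Fin 2) :=
  univ.filter fun x => inWindow a b k x.1 ∧ inWindow a b k x.2.1 ∧
    cellZ x.2.1 = cellZ x.1 + dirVec (x.2.2.val : ZMod 4)

lemma Edg_inj {n a b k : ℕ} {x y : Cell n × Cell n × Fin 2}
    (hx : x ∈ Edg n a b k) (hy : y ∈ Edg n a b k)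
    (h1 : x.1 = y.1) (h2 : x.2.2 = y.2.2) : x = y := by
  classical
  rw [Edg, Finset.mem_filter] at hx hy
  have hz : x.2.1 = y.2.1 := by
    apply cellZ_inj
    rw [hx.2.2.2, hy.2.2.2, h1, h2]
  exact Prod.ext h1 (Prod.ext hz h2)

lemma Edg_card {n : ℕ} (a b k : ℕ) : (Edg n a b k).card ≤ 2 * k ^ 2 := by
  classical
  have h : (Edg n a b k).card ≤
      (((Finset.range k ×ˢ Finset.range k) ×ˢ (univ : Finset (Fin 2)))).card := by
    apply Finset.card_le_card_of_injOn
      (fun x => ((x.1.1.val - a, x.1.2.val - b), x.2.2))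
    · intro x hx
      rw [Edg, Finset.mem_coe, Finset.mem_filter] at hx
      obtain ⟨-, hw, -, -⟩ := hx
      obtain ⟨hw1, hw2, hw3, hw4⟩ := hw
      simp only [Finset.mem_coe, Finset.mem_product, Finset.mem_range]
      exact ⟨⟨by omega, by omega⟩, Finset.mem_univ _⟩
    · intro x hx y hy hxy
      rw [Finset.mem_coe] at hx hy
      have hxw := (Finset.mem_filter.mp hx).2.1
      have hyw := (Finset.mem_filter.mp hy).2.1
      rw [Prod.ext_iff, Prod.ext_iff] at hxy
      obtain ⟨⟨e1, e2⟩, e3⟩ := hxy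
      simp only at e1 e2 e3
      apply Edg_inj hx hy _ e3
      have c1 : x.1.1.val = y.1.1.val := by
        obtain ⟨h1, -, -, -⟩ := hxw
        obtain ⟨h1', -, -, -⟩ := hyw
        omega
      have c2 : x.1.2.val = y.1.2.val := by
        obtain ⟨-, -, h1, -⟩ := hxw
        obtain ⟨-, -, h1', -⟩ := hyw
        omega
      exact Prod.ext (Fin.ext c1) (Fin.ext c2)
  rw [Finset.card_product, Finset.card_product, Finset.card_range, Finset.card_univ,
    Fintype.card_fin] at h
  calc (Edg n a b k).card ≤ k * k * 2 := h
    _ = 2 * k ^ 2 := by ring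

open scoped Classical in
lemma wtc_eq {n q : ℕ} (ι : Fin q → Fin q) (ω : Carving n q) (a b k : ℕ) (j : Fin q) :
    windowTypeCount ι (planted n) ω a b k j =
      ((Edg n a b k).filter fun x =>
        evalS ω (x.1, x.2.2) = j ∨ evalS ω (x.1, x.2.2) = ι j).card := by
  rw [windowTypeCount]
  apply congrArg
  ext x
  simp only [Edg, Finset.mem_filter, Finset.mem_univ, true_and, planted_carving]
  simp only [evalS]
  tauto

end S7
namespace S7
open Finset

open scoped Classical in
lemma bad_bound {n q : ℕ} {ι : Fin q → Fin q} (hι : ι ∘ ι = id) (t a b k : ℕ) :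
    ((univ.filter fun ω : Carving n q => IsValidCarving ι ω ∧
        t ≤ windowSM ι (planted n) ω a b k).card) * q ^ t
      ≤ (8 * k ^ 4) ^ t *
        (univ.filter fun ω : Carving n q => IsValidCarving ι ω).card := by
  have hii : ∀ j : Fin q, ι (ι j) = j := fun j => congrFun hι j
  set EE := Edg n a b k with hEE
  set sd : (Cell n × Cell n × Fin 2) → (Cell n × Fin 2) := fun x => (x.1, x.2.2) with hsd
  set G₀ : Finset (Fin t → (Cell n × Cell n × Fin 2) × (Cell n × Cell n × Fin 2)) :=
    (Fintype.piFinset fun _ : Fin t => EE ×ˢ EE).filter fun g =>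
      Function.Injective (fun z : Fin t × Fin 2 => if z.2 = 0 then (g z.1).1 else (g z.1).2)
    with hG₀
  set M : (Fin t → (Cell n × Cell n × Fin 2) × (Cell n × Cell n × Fin 2)) →
      Finset (Carving n q) := fun g =>
    univ.filter fun ω => IsValidCarving ι ω ∧
      ∀ i, evalS ω (sd (g i).2) = evalS ω (sd (g i).1) ∨
        evalS ω (sd (g i).2) = ι (evalS ω (sd (g i).1)) with hM
  -- step 1 : the bad set is covered
  have hcov : (univ.filter fun ω : Carving n q => IsValidCarving ι ω ∧
      t ≤ windowSM ι (planted n) ω a b k) ⊆ G₀.biUnion M := by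
    intro ω hω
    rw [Finset.mem_filter] at hω
    obtain ⟨-, hval, hsm⟩ := hω
    have hsm' : t ≤ ∑ j ∈ univ.filter (fun j : Fin q => j ≤ ι j),
        ((EE.filter fun x => evalS ω (sd x) = j ∨ evalS ω (sd x) = ι j)).card / 2 := by
      rw [windowSM] at hsm
      refine hsm.trans (le_of_eq (Finset.sum_congr rfl fun j _ => ?_))
      rw [wtc_eq]
    have hdisj : ∀ j ∈ univ.filter (fun j : Fin q => j ≤ ι j),
        ∀ j' ∈ univ.filter (fun j : Fin q => j ≤ ι j), j ≠ j' →
        Disjoint (EE.filter fun x => evalS ω (sd x) = j ∨ evalS ω (sd x) = ι j)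
          (EE.filter fun x => evalS ω (sd x) = j' ∨ evalS ω (sd x) = ι j') := by
      intro j hj j' hj' hne
      rw [Finset.mem_filter] at hj hj'
      rw [Finset.disjoint_left]
      intro x hx hx'
      rw [Finset.mem_filter] at hx hx'
      apply hne
      rcases hx.2 with h1 | h1 <;> rcases hx'.2 with h2 | h2
      · exact h1.symm.trans h2
      · have h3 : j = ι j' := h1.symm.trans h2
        have h4 : ι j = j' := by rw [h3, hii]
        exact le_antisymm (le_of_le_of_eq hj.2 h4) (le_of_le_of_eq hj'.2 h3.symm)
      · have h3 : ι j = j' := h1.symm.trans h2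
        have h4 : j = ι j' := by rw [← h3, hii]
        exact le_antisymm (le_of_le_of_eq hj.2 h3) (le_of_le_of_eq hj'.2 h4.symm)
      · have h5 : ι j = ι j' := h1.symm.trans h2
        have h6 := congrArg ι h5
        rw [hii, hii] at h6
        exact h6
    obtain ⟨g, hg1, hg2⟩ := extract t _ _ hdisj hsm'
    rw [Finset.mem_biUnion]
    refine ⟨g, ?_, ?_⟩
    · rw [hG₀, Finset.mem_filter]
      constructor
      · rw [Fintype.mem_piFinset]
        intro i
        obtain ⟨j, -, h1, h2⟩ := hg1 i
        rw [Finset.mem_product]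
        exact ⟨Finset.filter_subset _ _ h1, Finset.filter_subset _ _ h2⟩
      · exact hg2
    · rw [hM, Finset.mem_filter]
      refine ⟨Finset.mem_univ _, hval, fun i => ?_⟩
      obtain ⟨j, -, h1, h2⟩ := hg1 i
      rw [Finset.mem_filter] at h1 h2
      rcases h1.2 with e1 | e1 <;> rcases h2.2 with e2 | e2
      · left; rw [e1, e2]
      · right; rw [e2, e1]
      · right; rw [e2, e1, hii]
      · left; rw [e1, e2]
  -- step 2 : per-configuration bound
  have hper : ∀ g ∈ G₀, (M g).card * q ^ t ≤ 2 ^ t *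
      (univ.filter fun ω : Carving n q => IsValidCarving ι ω).card := by
    intro g hg
    rw [hG₀, Finset.mem_filter, Fintype.mem_piFinset] at hg
    obtain ⟨hmem, hinj⟩ := hg
    apply core hι t (fun i => (sd (g i).1, sd (g i).2))
    intro z z' hzz
    simp only at hzz
    rw [← apply_ite sd, ← apply_ite sd] at hzz
    have hXE : (if z.2 = 0 then (g z.1).1 else (g z.1).2) ∈ EE := by
      rcases Finset.mem_product.mp (hmem z.1) with ⟨h1, h2⟩
      split
      · exact h1
      · exact h2
    have hYE : (if z'.2 = 0 then (g z'.1).1 else (g z'.1).2) ∈ EE := by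
      rcases Finset.mem_product.mp (hmem z'.1) with ⟨h1, h2⟩
      split
      · exact h1
      · exact h2
    simp only [hsd] at hzz
    rw [Prod.mk.injEq] at hzz
    exact hinj (Edg_inj hXE hYE hzz.1 hzz.2)
  -- step 3 : combine
  have hG : G₀.card ≤ (2 * k ^ 2 * (2 * k ^ 2)) ^ t := by
    calc G₀.card ≤ (Fintype.piFinset fun _ : Fin t => EE ×ˢ EE).card :=
          Finset.card_le_card (Finset.filter_subset _ _)
      _ = ∏ _i : Fin t, (EE ×ˢ EE).card := Fintype.card_piFinset _
      _ = (EE.card * EE.card) ^ t := by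
          rw [Finset.card_product, Finset.prod_const, Finset.card_univ, Fintype.card_fin]
      _ ≤ (2 * k ^ 2 * (2 * k ^ 2)) ^ t :=
          Nat.pow_le_pow_left (Nat.mul_le_mul (Edg_card a b k) (Edg_card a b k)) t
  calc (univ.filter fun ω : Carving n q => IsValidCarving ι ω ∧
        t ≤ windowSM ι (planted n) ω a b k).card * q ^ t
      ≤ (G₀.biUnion M).card * q ^ t :=
        Nat.mul_le_mul_right _ (Finset.card_le_card hcov)
    _ ≤ (∑ g ∈ G₀, (M g).card) * q ^ t :=
        Nat.mul_le_mul_right _ Finset.card_biUnion_le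
    _ = ∑ g ∈ G₀, ((M g).card * q ^ t) := Finset.sum_mul _ _ _
    _ ≤ ∑ _g ∈ G₀, 2 ^ t *
        (univ.filter fun ω : Carving n q => IsValidCarving ι ω).card :=
        Finset.sum_le_sum hper
    _ = G₀.card * (2 ^ t *
        (univ.filter fun ω : Carving n q => IsValidCarving ι ω).card) := by
        rw [Finset.sum_const, smul_eq_mul]
    _ ≤ (2 * k ^ 2 * (2 * k ^ 2)) ^ t * (2 ^ t *
        (univ.filter fun ω : Carving n q => IsValidCarving ι ω).card) :=
        Nat.mul_le_mul_right _ hG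
    _ = (8 * k ^ 4) ^ t *
        (univ.filter fun ω : Carving n q => IsValidCarving ι ω).card := by
        rw [← mul_assoc, ← mul_pow]
        congr 2
        ring

end S7
namespace S7
open Finset

lemma valid_exists {n q : ℕ} (ι : Fin q → Fin q) (hι : ι ∘ ι = id) (hq : 0 < q) :
    ∃ ω : Carving n q, IsValidCarving ι ω := by
  classical
  refine ⟨fun c d => if d = 0 ∨ d = 1 then ⟨0, hq⟩ else ι ⟨0, hq⟩, ?_⟩
  intro p p' d _
  dsimp only
  have hiff : ∀ d : ZMod 4, (d + 2 = 0 ∨ d + 2 = 1) ↔ ¬(d = 0 ∨ d = 1) := by decide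
  by_cases h : d = 0 ∨ d = 1
  · rw [if_pos h, if_neg (fun hc => ((hiff d).mp hc) h)]
  · rw [if_neg h, if_pos ((hiff d).mpr h)]
    exact (congrFun hι _).symm

open scoped Classical in
lemma bdry_card (n k : ℕ) :
    ((Finset.range n ×ˢ Finset.range n).filter fun ab : ℕ × ℕ =>
      ab.1 = 0 ∨ ab.2 = 0 ∨ ab.1 + k = n ∨ ab.2 + k = n).card ≤ 4 * n := by
  classical
  have hsub : ((Finset.range n ×ˢ Finset.range n).filter fun ab : ℕ × ℕ =>
      ab.1 = 0 ∨ ab.2 = 0 ∨ ab.1 + k = n ∨ ab.2 + k = n) ⊆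
      (({0} : Finset ℕ) ×ˢ Finset.range n) ∪ (Finset.range n ×ˢ ({0} : Finset ℕ)) ∪
      (({n - k} : Finset ℕ) ×ˢ Finset.range n) ∪ (Finset.range n ×ˢ ({n - k} : Finset ℕ)) := by
    intro ab hab
    rw [Finset.mem_filter, Finset.mem_product] at hab
    obtain ⟨⟨h1, h2⟩, hc⟩ := hab
    simp only [Finset.mem_union, Finset.mem_product, Finset.mem_singleton]
    rcases hc with h | h | h | h
    · exact Or.inl (Or.inl (Or.inl ⟨h, h2⟩))
    · exact Or.inl (Or.inl (Or.inr ⟨h1, h⟩))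
    · exact Or.inl (Or.inr ⟨by omega, h2⟩)
    · exact Or.inr ⟨h1, by omega⟩
  calc ((Finset.range n ×ˢ Finset.range n).filter fun ab : ℕ × ℕ =>
      ab.1 = 0 ∨ ab.2 = 0 ∨ ab.1 + k = n ∨ ab.2 + k = n).card
      ≤ _ := Finset.card_le_card hsub
    _ ≤ (((({0} : Finset ℕ) ×ˢ Finset.range n) ∪ (Finset.range n ×ˢ ({0} : Finset ℕ)) ∪
        (({n - k} : Finset ℕ) ×ˢ Finset.range n)).card +
        ((Finset.range n ×ˢ ({n - k} : Finset ℕ))).card) := Finset.card_union_le _ _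
    _ ≤ ((({0} : Finset ℕ) ×ˢ Finset.range n) ∪ (Finset.range n ×ˢ ({0} : Finset ℕ))).card +
        ((({n - k} : Finset ℕ) ×ˢ Finset.range n)).card +
        ((Finset.range n ×ˢ ({n - k} : Finset ℕ))).card :=
        Nat.add_le_add_right (Finset.card_union_le _ _) _
    _ ≤ (((({0} : Finset ℕ) ×ˢ Finset.range n)).card +
        ((Finset.range n ×ˢ ({0} : Finset ℕ))).card) +
        ((({n - k} : Finset ℕ) ×ˢ Finset.range n)).card +
        ((Finset.range n ×ˢ ({n - k} : Finset ℕ))).card :=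
        Nat.add_le_add_right (Nat.add_le_add_right (Finset.card_union_le _ _) _) _
    _ ≤ 4 * n := by
        simp only [Finset.card_product, Finset.card_singleton, Finset.card_range]
        omega

open scoped Classical in
lemma notgood_bound {n q k : ℕ} (ι : Fin q → Fin q) (hι : ι ∘ ι = id) (hk : 0 < k)
    (hq : 0 < q) :
    ((univ.filter fun ω : Carving n q => IsValidCarving ι ω ∧
        ¬ ∀ a b : ℕ, a + k ≤ n → b + k ≤ n →
          windowSM ι (planted n) ω a b k ≤ 2 ∧
          ((a = 0 ∨ b = 0 ∨ a + k = n ∨ b + k = n) →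
            windowSM ι (planted n) ω a b k ≤ 1)).card : ℝ)
    ≤ ((n : ℝ) ^ 2 * (8 * (k : ℝ) ^ 4) ^ 3 / (q : ℝ) ^ 3 +
        4 * (n : ℝ) * (8 * (k : ℝ) ^ 4) ^ 2 / (q : ℝ) ^ 2) *
      ((univ.filter fun ω : Carving n q => IsValidCarving ι ω).card : ℝ) := by
  classical
  set V := univ.filter fun ω : Carving n q => IsValidCarving ι ω with hV
  set Bad : ℕ → ℕ → ℕ → Finset (Carving n q) := fun t a b =>
    univ.filter fun ω => IsValidCarving ι ω ∧ t ≤ windowSM ι (planted n) ω a b k with hBad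
  set R := Finset.range n ×ˢ Finset.range n with hR
  set Bd := R.filter (fun ab : ℕ × ℕ =>
    ab.1 = 0 ∨ ab.2 = 0 ∨ ab.1 + k = n ∨ ab.2 + k = n) with hBd
  have hsub : (univ.filter fun ω : Carving n q => IsValidCarving ι ω ∧
      ¬ ∀ a b : ℕ, a + k ≤ n → b + k ≤ n →
        windowSM ι (planted n) ω a b k ≤ 2 ∧
        ((a = 0 ∨ b = 0 ∨ a + k = n ∨ b + k = n) →
          windowSM ι (planted n) ω a b k ≤ 1)) ⊆
      (R.biUnion fun ab => Bad 3 ab.1 ab.2) ∪ (Bd.biUnion fun ab => Bad 2 ab.1 ab.2) := by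
    intro ω hω
    rw [Finset.mem_filter] at hω
    obtain ⟨-, hval, hbadW⟩ := hω
    push_neg at hbadW
    obtain ⟨a, b, ha, hb, hbad⟩ := hbadW
    have habR : (a, b) ∈ R := by
      rw [hR, Finset.mem_product, Finset.mem_range, Finset.mem_range]
      constructor <;> omega
    rw [Finset.mem_union]
    by_cases h2 : windowSM ι (planted n) ω a b k ≤ 2
    · right
      obtain ⟨hbdry, hsm⟩ := hbad h2
      rw [Finset.mem_biUnion]
      refine ⟨(a, b), ?_, ?_⟩
      · rw [hBd, Finset.mem_filter]
        exact ⟨habR, hbdry⟩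
      · rw [hBad, Finset.mem_filter]
        exact ⟨Finset.mem_univ _, hval, hsm⟩
    · left
      rw [Finset.mem_biUnion]
      have h3 : 3 ≤ windowSM ι (planted n) ω a b k := by omega
      exact ⟨(a, b), habR, by
        rw [hBad, Finset.mem_filter]
        exact ⟨Finset.mem_univ _, hval, h3⟩⟩
  have hN : (univ.filter fun ω : Carving n q => IsValidCarving ι ω ∧
      ¬ ∀ a b : ℕ, a + k ≤ n → b + k ≤ n →
        windowSM ι (planted n) ω a b k ≤ 2 ∧
        ((a = 0 ∨ b = 0 ∨ a + k = n ∨ b + k = n) →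
          windowSM ι (planted n) ω a b k ≤ 1)).card ≤
      (∑ ab ∈ R, (Bad 3 ab.1 ab.2).card) + ∑ ab ∈ Bd, (Bad 2 ab.1 ab.2).card :=
    (Finset.card_le_card hsub).trans ((Finset.card_union_le _ _).trans
      (Nat.add_le_add Finset.card_biUnion_le Finset.card_biUnion_le))
  have hb : ∀ (t a b : ℕ), ((Bad t a b).card : ℝ) ≤
      (8 * (k : ℝ) ^ 4) ^ t / (q : ℝ) ^ t * (V.card : ℝ) := by
    intro t a b
    have h := bad_bound (n := n) hι t a b k
    have hq' : (0 : ℝ) < (q : ℝ) ^ t := by positivity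
    rw [div_mul_eq_mul_div, le_div_iff₀ hq']
    calc ((Bad t a b).card : ℝ) * (q : ℝ) ^ t
        = (((Bad t a b).card * q ^ t : ℕ) : ℝ) := by push_cast; ring
      _ ≤ (((8 * k ^ 4) ^ t * V.card : ℕ) : ℝ) := by exact_mod_cast h
      _ = (8 * (k : ℝ) ^ 4) ^ t * (V.card : ℝ) := by push_cast; ring
  have hVnn : (0 : ℝ) ≤ (V.card : ℝ) := Nat.cast_nonneg _
  have hRcard : (R.card : ℝ) = (n : ℝ) ^ 2 := by
    rw [hR, Finset.card_product, Finset.card_range]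
    push_cast
    ring
  have hBdcard : (Bd.card : ℝ) ≤ 4 * (n : ℝ) := by
    have := bdry_card n k
    have h2 : Bd.card ≤ 4 * n := by
      refine le_trans (le_of_eq ?_) this
      rw [hBd, hR]
    exact_mod_cast h2
  calc ((univ.filter fun ω : Carving n q => IsValidCarving ι ω ∧
        ¬ ∀ a b : ℕ, a + k ≤ n → b + k ≤ n →
          windowSM ι (planted n) ω a b k ≤ 2 ∧
          ((a = 0 ∨ b = 0 ∨ a + k = n ∨ b + k = n) →
            windowSM ι (planted n) ω a b k ≤ 1)).card : ℝ)
      ≤ (((∑ ab ∈ R, (Bad 3 ab.1 ab.2).card) + ∑ ab ∈ Bd, (Bad 2 ab.1 ab.2).card : ℕ) : ℝ) := by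
        exact_mod_cast hN
    _ = (∑ ab ∈ R, ((Bad 3 ab.1 ab.2).card : ℝ)) +
        ∑ ab ∈ Bd, ((Bad 2 ab.1 ab.2).card : ℝ) := by push_cast; ring
    _ ≤ (∑ _ab ∈ R, (8 * (k : ℝ) ^ 4) ^ 3 / (q : ℝ) ^ 3 * (V.card : ℝ)) +
        ∑ _ab ∈ Bd, (8 * (k : ℝ) ^ 4) ^ 2 / (q : ℝ) ^ 2 * (V.card : ℝ) :=
        add_le_add (Finset.sum_le_sum fun ab _ => hb 3 ab.1 ab.2)
          (Finset.sum_le_sum fun ab _ => hb 2 ab.1 ab.2)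
    _ = (R.card : ℝ) * ((8 * (k : ℝ) ^ 4) ^ 3 / (q : ℝ) ^ 3 * (V.card : ℝ)) +
        (Bd.card : ℝ) * ((8 * (k : ℝ) ^ 4) ^ 2 / (q : ℝ) ^ 2 * (V.card : ℝ)) := by
        rw [Finset.sum_const, Finset.sum_const, nsmul_eq_mul, nsmul_eq_mul]
    _ ≤ (n : ℝ) ^ 2 * ((8 * (k : ℝ) ^ 4) ^ 3 / (q : ℝ) ^ 3 * (V.card : ℝ)) +
        (4 * (n : ℝ)) * ((8 * (k : ℝ) ^ 4) ^ 2 / (q : ℝ) ^ 2 * (V.card : ℝ)) := by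
        apply add_le_add
        · exact mul_le_mul_of_nonneg_right (le_of_eq hRcard) (by positivity)
        · exact mul_le_mul_of_nonneg_right hBdcard (by positivity)
    _ = ((n : ℝ) ^ 2 * (8 * (k : ℝ) ^ 4) ^ 3 / (q : ℝ) ^ 3 +
        4 * (n : ℝ) * (8 * (k : ℝ) ^ 4) ^ 2 / (q : ℝ) ^ 2) * (V.card : ℝ) := by
        ring

end S7
open S7 in

/-- Let `c > 0` be fixed, `q = q(n) ≥ c·n`, and let `k = k(n)` be a
sequence of positive integers with `k = o(n^{1/12})`.  Then the probability that the
planted assembly of a random `n × n` puzzle with `q` jig types is `k`-good tends to `1`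
as `n → ∞`. -/
theorem statement_7 (c : ℝ) (hc : 0 < c) (q : ℕ → ℕ) (ι : ∀ n, Fin (q n) → Fin (q n))
    (hι : ∀ n, ι n ∘ ι n = id)
    (hq : ∀ n : ℕ, (c * n : ℝ) ≤ q n)
    (k : ℕ → ℕ) (hkpos : ∀ n, 0 < k n)
    (hko : Tendsto (fun n => (k n : ℝ) / (n : ℝ) ^ ((1 : ℝ) / 12)) atTop (nhds 0)) :
    Tendsto (fun n =>
        puzzleProb (ι n) fun ω : Carving n (q n) => KGood (ι n) (planted n) ω (k n))
      atTop (nhds 1) := by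
  classical
  set C0 : ℝ := 512 / c ^ 3 + 256 / c ^ 2 with hC0
  set P : ℕ → ℝ := fun n => puzzleProb (ι n) fun ω : Carving n (q n) =>
    KGood (ι n) (planted n) ω (k n) with hP
  have hcn : Tendsto (fun n : ℕ => c * n) atTop atTop :=
    Tendsto.const_mul_atTop hc tendsto_natCast_atTop_atTop
  have hev : ∀ᶠ n in atTop, 0 ≤ 1 - P n ∧ 1 - P n ≤ C0 * ((k n : ℝ) ^ 12 / n) := by
    filter_upwards [hcn.eventually_ge_atTop 1, eventually_ge_atTop 1] with n hcn1 hn1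
    have hn0 : (0 : ℝ) < n := by exact_mod_cast hn1
    have hq0 : (0 : ℝ) < q n := lt_of_lt_of_le (lt_of_lt_of_le one_pos hcn1) (hq n)
    have hqnat : 0 < q n := by exact_mod_cast hq0
    have hk1 : (1 : ℝ) ≤ (k n : ℝ) := by exact_mod_cast hkpos n
    set V := (univ.filter fun ω : Carving n (q n) => IsValidCarving (ι n) ω) with hV
    set W : Carving n (q n) → Prop := fun ω => ∀ a b : ℕ, a + k n ≤ n → b + k n ≤ n →
      windowSM (ι n) (planted n) ω a b (k n) ≤ 2 ∧
      ((a = 0 ∨ b = 0 ∨ a + k n = n ∨ b + k n = n) →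
        windowSM (ι n) (planted n) ω a b (k n) ≤ 1) with hW
    set G := (univ.filter fun ω : Carving n (q n) => IsValidCarving (ι n) ω ∧ W ω) with hG
    set N := (univ.filter fun ω : Carving n (q n) => IsValidCarving (ι n) ω ∧ ¬ W ω) with hN
    have hVpos : 0 < V.card := by
      obtain ⟨ω, hω⟩ := valid_exists (n := n) (ι n) (hι n) hqnat
      exact Finset.card_pos.mpr ⟨ω, Finset.mem_filter.mpr ⟨Finset.mem_univ _, hω⟩⟩
    have hV0 : (V.card : ℝ) ≠ 0 := by positivity
    have hGfix : (univ.filter fun ω : Carving n (q n) =>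
        IsValidCarving (ι n) ω ∧ KGood (ι n) (planted n) ω (k n)) = G := by
      rw [hG]
      apply Finset.filter_congr
      intro ω _
      simp only [KGood, hW]
      constructor
      · rintro ⟨hv, -, hw⟩
        exact ⟨hv, hw⟩
      · rintro ⟨hv, hw⟩
        exact ⟨hv, (planted_feasible_iff _ _).mpr hv, hw⟩
    have hPn : P n = (G.card : ℝ) / V.card := by
      rw [hP]
      simp only [puzzleProb]
      rw [hGfix]
    have hsplit : G.card + N.card = V.card := by
      have e1 : G = V.filter (fun ω => W ω) := by
        rw [hG, hV, Finset.filter_filter]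
      have e2 : N = V.filter (fun ω => ¬ W ω) := by
        rw [hN, hV, Finset.filter_filter]
      rw [e1, e2]
      exact Finset.card_filter_add_card_filter_not _
    have hsplitR : (G.card : ℝ) + N.card = V.card := by exact_mod_cast hsplit
    have h1mP : 1 - P n = (N.card : ℝ) / V.card := by
      have hsum : (G.card : ℝ) / V.card + (N.card : ℝ) / V.card = 1 := by
        rw [← add_div, hsplitR, div_self hV0]
      rw [hPn]
      linarith
    constructor
    · rw [h1mP]
      positivity
    · rw [h1mP]
      have hbound := notgood_bound (n := n) (k := k n) (ι n) (hι n) (hkpos n) hqnat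
      have hdiv : (N.card : ℝ) / V.card ≤
          (n : ℝ) ^ 2 * (8 * (k n : ℝ) ^ 4) ^ 3 / (q n : ℝ) ^ 3 +
          4 * (n : ℝ) * (8 * (k n : ℝ) ^ 4) ^ 2 / (q n : ℝ) ^ 2 := by
        rw [div_le_iff₀ (by positivity)]
        exact hbound
      refine hdiv.trans ?_
      have hcn0 : (0 : ℝ) < c * n := by positivity
      have hq3 : (c * n) ^ 3 ≤ (q n : ℝ) ^ 3 := pow_le_pow_left₀ (le_of_lt hcn0) (hq n) 3
      have hq2 : (c * n) ^ 2 ≤ (q n : ℝ) ^ 2 := pow_le_pow_left₀ (le_of_lt hcn0) (hq n) 2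
      have ht1 : (n : ℝ) ^ 2 * (8 * (k n : ℝ) ^ 4) ^ 3 / (q n : ℝ) ^ 3 ≤
          512 / c ^ 3 * ((k n : ℝ) ^ 12 / n) := by
        have := div_le_div_of_nonneg_left
          (show (0:ℝ) ≤ (n : ℝ) ^ 2 * (8 * (k n : ℝ) ^ 4) ^ 3 by positivity)
          (show (0:ℝ) < (c * n) ^ 3 by positivity) hq3
        refine this.trans (le_of_eq ?_)
        field_simp
        ring
      have ht2 : 4 * (n : ℝ) * (8 * (k n : ℝ) ^ 4) ^ 2 / (q n : ℝ) ^ 2 ≤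
          256 / c ^ 2 * ((k n : ℝ) ^ 12 / n) := by
        have h01 := div_le_div_of_nonneg_left
          (show (0:ℝ) ≤ 4 * (n : ℝ) * (8 * (k n : ℝ) ^ 4) ^ 2 by positivity)
          (show (0:ℝ) < (c * n) ^ 2 by positivity) hq2
        refine h01.trans ?_
        have hkk : (k n : ℝ) ^ 8 ≤ (k n : ℝ) ^ 12 :=
          pow_le_pow_right₀ hk1 (by norm_num)
        have heq : 4 * (n : ℝ) * (8 * (k n : ℝ) ^ 4) ^ 2 / (c * n) ^ 2 =
            256 / c ^ 2 * ((k n : ℝ) ^ 8 / n) := by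
          field_simp
          ring
        rw [heq]
        exact mul_le_mul_of_nonneg_left ((div_le_div_iff_of_pos_right hn0).mpr hkk) (by positivity)
      calc _ ≤ 512 / c ^ 3 * ((k n : ℝ) ^ 12 / n) + 256 / c ^ 2 * ((k n : ℝ) ^ 12 / n) :=
            add_le_add ht1 ht2
        _ = C0 * ((k n : ℝ) ^ 12 / n) := by rw [hC0]; ring
  have hlim : Tendsto (fun n => C0 * ((k n : ℝ) ^ 12 / n)) atTop (nhds 0) := by
    have h12 : Tendsto (fun n => ((k n : ℝ) / (n : ℝ) ^ ((1 : ℝ) / 12)) ^ 12)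
        atTop (nhds 0) := by
      have h := hko.pow 12
      rw [show ((0:ℝ) ^ (12:ℕ)) = 0 by norm_num] at h
      exact h
    have heq : ∀ᶠ n : ℕ in atTop,
        ((k n : ℝ) / (n : ℝ) ^ ((1 : ℝ) / 12)) ^ 12 = (k n : ℝ) ^ 12 / n := by
      filter_upwards [eventually_ge_atTop 1] with n hn1
      have hn0 : (0 : ℝ) ≤ n := by positivity
      rw [div_pow]
      congr 1
      rw [← Real.rpow_natCast ((n : ℝ) ^ ((1 : ℝ) / 12)) 12, ← Real.rpow_mul hn0]
      norm_num
    have h0 : Tendsto (fun n => (k n : ℝ) ^ 12 / n) atTop (nhds 0) :=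
      Tendsto.congr' heq h12
    have h1 := h0.const_mul C0
    rw [mul_zero] at h1
    exact h1
  have hsq : Tendsto (fun n => 1 - P n) atTop (nhds 0) := by
    apply squeeze_zero' (hev.mono fun n h => h.1) (hev.mono fun n h => h.2) hlim
  have hfin := Tendsto.const_sub (1 : ℝ) hsq
  simp only [sub_zero, sub_sub_cancel] at hfin
  exact hfin
end
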